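/- arXiv:1611.05658 — 6 statements merged into one kernel-verified Lean document; each statement's English description precedes it below -/
import Mathlib

section
/- Let V be a finite-dimensional real vector space and let W be a finite group acting on V by linear automorphisms. For v ∈ V write Π_v := convexHull(W • v) for the convex hull of the W-orbit of v. Let x ∈ V, let f be a nonempty exposed face of Π_x, and suppose y ∈ f and z ∈ Π_x satisfy y ∈ Π_z. Then there exists σ ∈ W such that σ • z ∈ f. -/
/-- Let `V` be a finite-dimensional real vector space and `W` a finite group
acting on `V` by linear automorphisms. For `v ∈ V` let `Π_v` be the convex hull of the
`W`-orbit of `v`. If `f` is a nonempty exposed face of `Π_x`, `y ∈ f`, `z ∈ Π_x` and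
`y ∈ Π_z`, then there exists `σ ∈ W` with `σ • z ∈ f`. -/
theorem exists_smul_mem_of_mem_exposed_face
    {V : Type*} [AddCommGroup V] [Module ℝ V] [FiniteDimensional ℝ V]
    [TopologicalSpace V] [IsTopologicalAddGroup V] [ContinuousSMul ℝ V]
    {W : Type*} [Group W] [Fintype W] [DistribMulAction W V] [SMulCommClass W ℝ V]
    (x : V) (f : Set V)
    (hf : IsExposed ℝ (convexHull ℝ (MulAction.orbit W x)) f)
    (hfne : f.Nonempty)
    (y z : V) (hy : y ∈ f)
    (hz : z ∈ convexHull ℝ (MulAction.orbit W x))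
    (hyz : y ∈ convexHull ℝ (MulAction.orbit W z)) :
    ∃ σ : W, σ • z ∈ f := by
  obtain ⟨l, hl⟩ := hf hfne
  -- each σ • z lies in the hull of the orbit of x
  have hσz : ∀ σ : W, σ • z ∈ convexHull ℝ (MulAction.orbit W x) := by
    intro σ
    have h1 : (DistribMulAction.toLinearMap ℝ V σ) z ∈
        (DistribMulAction.toLinearMap ℝ V σ) '' convexHull ℝ (MulAction.orbit W x) :=
      Set.mem_image_of_mem _ hz
    rw [(DistribMulAction.toLinearMap ℝ V σ).image_convexHull] at h1
    have h2 : (DistribMulAction.toLinearMap ℝ V σ) '' MulAction.orbit W x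
        = MulAction.orbit W x := by
      have := MulAction.smul_orbit σ x
      rw [← Set.image_smul] at this
      exact this
    rwa [h2] at h1
  have hymax : ∀ b ∈ convexHull ℝ (MulAction.orbit W x), l b ≤ l y := by
    rw [hl] at hy; exact hy.2
  by_contra hcon
  push_neg at hcon
  have hlt : ∀ σ : W, l (σ • z) < l y := by
    intro σ
    rcases lt_or_eq_of_le (hymax _ (hσz σ)) with h | h
    · exact h
    · exfalso
      apply hcon σ
      rw [hl]
      exact ⟨hσz σ, fun b hb => h ▸ hymax b hb⟩
  -- the orbit of z lies in the open halfspace l < l y, which is convex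
  have hsub : MulAction.orbit W z ⊆ {v | l v < l y} := by
    rintro _ ⟨σ, rfl⟩
    exact hlt σ
  have hconv : Convex ℝ {v : V | l v < l y} :=
    convex_halfSpace_lt (l.toLinearMap.isLinear) (l y)
  have : y ∈ {v : V | l v < l y} := convexHull_min hsub hconv hyz
  exact absurd this (by simp)
end

section
/- Let X and Y be real symmetric n×n matrices. Then Y lies in convexHull{g X gᵀ : g ∈ O(n)} if and only if tr Y = tr X and, for every p = 1, …, n, the sum of the p largest eigenvalues of Y (with multiplicity) is at most the sum of the p largest eigenvalues of X. -/
open Matrix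

/-- The sum of the `p` largest values of `f` (with multiplicity): the supremum of all sums of
`f` over `p`-element subsets of the index set. -/
noncomputable def sumLargest {ι : Type*} [Fintype ι] (f : ι → ℝ) (p : ℕ) : ℝ :=
  sSup {x : ℝ | ∃ s : Finset ι, s.card = p ∧ x = ∑ i ∈ s, f i}

section SumLargest

variable {ι : Type*} [Fintype ι] (f : ι → ℝ) (p : ℕ)

private lemma sumLargest_set_finite :
    {x : ℝ | ∃ s : Finset ι, s.card = p ∧ x = ∑ i ∈ s, f i}.Finite := by
  have : {x : ℝ | ∃ s : Finset ι, s.card = p ∧ x = ∑ i ∈ s, f i} =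
      ↑((Finset.univ.powersetCard p).image (fun s => ∑ i ∈ s, f i)) := by
    ext x
    simp only [Set.mem_setOf_eq, Finset.coe_image, Set.mem_image, Finset.mem_coe,
      Finset.mem_powersetCard_univ]
    constructor
    · rintro ⟨s, hs, rfl⟩; exact ⟨s, hs, rfl⟩
    · rintro ⟨s, hs, rfl⟩; exact ⟨s, hs, rfl⟩
  rw [this]; exact Finset.finite_toSet _

variable {f p}

private lemma sum_le_sumLargest {s : Finset ι} (hs : s.card = p) :
    ∑ i ∈ s, f i ≤ sumLargest f p :=
  le_csSup (sumLargest_set_finite f p).bddAbove ⟨s, hs, rfl⟩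

private lemma exists_sumLargest_eq (hp : p ≤ Fintype.card ι) :
    ∃ s : Finset ι, s.card = p ∧ sumLargest f p = ∑ i ∈ s, f i := by
  obtain ⟨s, -, hs⟩ := Finset.exists_subset_card_eq (s := (Finset.univ : Finset ι)) (n := p)
    (by simpa using hp)
  have hne : {x : ℝ | ∃ s : Finset ι, s.card = p ∧ x = ∑ i ∈ s, f i}.Nonempty :=
    ⟨∑ i ∈ s, f i, s, hs, rfl⟩
  obtain ⟨t, ht, hx⟩ := hne.csSup_mem (sumLargest_set_finite f p)
  exact ⟨t, ht, hx⟩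

private lemma weighted_sum_le_sumLargest [DecidableEq ι] {w : ι → ℝ}
    (hw0 : ∀ i, 0 ≤ w i) (hw1 : ∀ i, w i ≤ 1) (hp1 : 1 ≤ p) (hpn : p ≤ Fintype.card ι)
    (hsum : ∑ i, w i = p) :
    ∑ i, w i * f i ≤ sumLargest f p := by
  obtain ⟨s, hs, hmax⟩ := exists_sumLargest_eq (f := f) hpn
  have hprop : ∀ i ∈ s, ∀ j ∉ s, f j ≤ f i := by
    intro i hi j hj
    by_contra hlt
    push_neg at hlt
    have hjne : j ∉ s.erase i := fun h => hj (Finset.mem_of_mem_erase h)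
    have hcard : (insert j (s.erase i)).card = p := by
      rw [Finset.card_insert_of_notMem hjne, Finset.card_erase_of_mem hi, hs]
      omega
    have hsum' : ∑ k ∈ insert j (s.erase i), f k = ∑ k ∈ s, f k - f i + f j := by
      rw [Finset.sum_insert hjne, Finset.sum_erase_eq_sub hi]; ring
    have := sum_le_sumLargest (f := f) hcard
    rw [hsum', ← hmax] at this
    linarith
  have hne : s.Nonempty := Finset.card_pos.mp (by omega)
  obtain ⟨i0, hi0s, hi0⟩ := s.exists_min_image f hne
  set m := f i0 with hm
  have h1 : ∑ i ∈ s, (w i - 1) * f i ≤ ∑ i ∈ s, (w i - 1) * m := by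
    refine Finset.sum_le_sum fun i hi => ?_
    have := hi0 i hi
    nlinarith [hw1 i]
  have h2 : ∑ i ∈ sᶜ, w i * f i ≤ ∑ i ∈ sᶜ, w i * m := by
    refine Finset.sum_le_sum fun i hi => ?_
    have := hprop i0 hi0s i (Finset.mem_compl.mp hi)
    nlinarith [hw0 i]
  have hsplit : ∑ i, w i * f i =
      ∑ i ∈ s, (w i - 1) * f i + ∑ i ∈ sᶜ, w i * f i + ∑ i ∈ s, f i := by
    rw [← Finset.sum_add_sum_compl s (fun i => w i * f i)]
    simp [sub_mul, Finset.sum_sub_distrib]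
    ring
  have hwsplit : ∑ i ∈ s, (w i - 1) + ∑ i ∈ sᶜ, w i = 0 := by
    have h := Finset.sum_add_sum_compl s w
    rw [hsum] at h
    rw [Finset.sum_sub_distrib]
    simp only [Finset.sum_const, nsmul_eq_mul, mul_one, hs]
    linarith
  have hms : ∑ i ∈ s, (w i - 1) * m + ∑ i ∈ sᶜ, w i * m = 0 := by
    rw [← Finset.sum_mul, ← Finset.sum_mul, ← add_mul, hwsplit, zero_mul]
  rw [hmax, hsplit]
  linarith

end SumLargest

private lemma sumLargest_comp_equiv {ι : Type*} [Fintype ι] (f : ι → ℝ) (e : ι ≃ ι) (p : ℕ) :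
    sumLargest (f ∘ e) p = sumLargest f p := by
  unfold sumLargest
  congr 1
  ext x
  constructor
  · rintro ⟨s, hs, rfl⟩
    refine ⟨s.map e.toEmbedding, by simp [hs], ?_⟩
    rw [Finset.sum_map]
    rfl
  · rintro ⟨s, hs, rfl⟩
    refine ⟨s.map e.symm.toEmbedding, by simp [hs], ?_⟩
    rw [Finset.sum_map]
    simp [Function.comp]

private lemma strictMono_val_le {p n : ℕ} {g : Fin p → Fin n} (hg : StrictMono g) (j : Fin p) :
    (j : ℕ) ≤ (g j : ℕ) := by
  obtain ⟨m, hm⟩ := j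
  induction m with
  | zero => simp
  | succ m ih =>
      have hm' : m < p := lt_trans (Nat.lt_succ_self m) hm
      have h1 := ih hm'
      have h2 : g ⟨m, hm'⟩ < g ⟨m + 1, hm⟩ := hg (by simp [Fin.lt_def])
      rw [Fin.lt_def] at h2
      simp only [Fin.val_mk] at h1 h2 ⊢
      omega

/-- For an antitone function on `Fin n`, the `p` largest values are the first `p`. -/
private lemma antitone_sumLargest_eq {n p : ℕ} {x : Fin n → ℝ} (hx : Antitone x) (hp : p ≤ n) :
    sumLargest x p = ∑ j : Fin p, x (Fin.castLE hp j) := by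
  set s₀ : Finset (Fin n) := Finset.univ.map (Fin.castLEEmb hp) with hs₀
  have hcard₀ : s₀.card = p := by simp [hs₀]
  have hsum₀ : ∑ k ∈ s₀, x k = ∑ j : Fin p, x (Fin.castLE hp j) := by
    rw [hs₀, Finset.sum_map]
    rfl
  rw [← hsum₀]
  refine le_antisymm ?_ (sum_le_sumLargest hcard₀)
  have hb : ∀ s : Finset (Fin n), s.card = p → ∑ i ∈ s, x i ≤ ∑ k ∈ s₀, x k := by
    intro s hs
    have e := s.orderIsoOfFin hs
    have h1 : ∑ i ∈ s, x i = ∑ j : Fin p, x (e j) := by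
      rw [← Finset.sum_coe_sort s]
      exact (Equiv.sum_comp e.toEquiv (fun a => x a)).symm
    rw [h1, hsum₀]
    refine Finset.sum_le_sum fun j _ => ?_
    refine hx ?_
    have hsm : StrictMono (fun j : Fin p => (e j : Fin n)) := fun a b hab => e.strictMono hab
    exact strictMono_val_le hsm j
  apply csSup_le
  · exact ⟨∑ i ∈ s₀, x i, s₀, hcard₀, rfl⟩
  · rintro y ⟨s, hs, rfl⟩
    exact hb s hs

/-- Abel summation: if `a` is monotone, all initial partial sums of `d` are nonnegative and
the total sum of `d` is zero, then `∑ a k * d k ≤ 0`. -/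
private lemma abel_pairing_nonpos {n : ℕ} {a d : Fin n → ℝ} (ha : Monotone a)
    (hD : ∀ (p : ℕ) (hp : p ≤ n), 1 ≤ p → 0 ≤ ∑ j : Fin p, d (Fin.castLE hp j))
    (hDn : ∑ j, d j = 0) :
    ∑ k, a k * d k ≤ 0 := by
  rcases Nat.eq_zero_or_pos n with rfl | hn
  · simp
  set A : ℕ → ℝ := fun i => if h : i < n then a ⟨i, h⟩ else 0 with hA
  set g : ℕ → ℝ := fun i => if h : i < n then d ⟨i, h⟩ else 0 with hg
  have bridge : ∀ (p : ℕ) (hp : p ≤ n),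
      ∑ j ∈ Finset.range p, g j = ∑ j : Fin p, d (Fin.castLE hp j) := by
    intro p hp
    rw [← Fin.sum_univ_eq_sum_range]
    refine Finset.sum_congr rfl fun j _ => ?_
    have hj : (j : ℕ) < n := lt_of_lt_of_le j.2 hp
    simp only [hg, dif_pos hj]
    rfl
  have hmain : ∑ k : Fin n, a k * d k = ∑ i ∈ Finset.range n, A i • g i := by
    rw [← Fin.sum_univ_eq_sum_range (fun i => A i • g i) n]
    refine Finset.sum_congr rfl fun k _ => ?_
    simp only [hA, hg, dif_pos k.2, smul_eq_mul]
  rw [hmain, Finset.sum_range_by_parts]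
  have hGn : ∑ j ∈ Finset.range n, g j = 0 := by
    rw [bridge n le_rfl, ← hDn]
    exact Finset.sum_congr rfl fun j _ => rfl
  rw [hGn, smul_zero, zero_sub, neg_nonpos]
  refine Finset.sum_nonneg fun i hi => ?_
  rw [Finset.mem_range] at hi
  have hi1 : i + 1 ≤ n := by omega
  have hstep : 0 ≤ A (i + 1) - A i := by
    have h1 : i < n := by omega
    have h2 : i + 1 < n := by omega
    simp only [hA, dif_pos h1, dif_pos h2, sub_nonneg]
    exact ha (by simp [Fin.le_def])
  have hpos : 0 ≤ ∑ j ∈ Finset.range (i + 1), g j := by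
    rw [bridge (i + 1) hi1]
    exact hD (i + 1) hi1 (by omega)
  exact mul_nonneg hstep hpos

/-- Core scalar inequality behind Hardy–Littlewood–Pólya, via rearrangement and Abel
summation. -/
private lemma exists_perm_sum_le {n : ℕ} (c μ lam : Fin n → ℝ)
    (hsum : ∑ i, μ i = ∑ i, lam i)
    (hmaj : ∀ p : ℕ, 1 ≤ p → p ≤ n → sumLargest μ p ≤ sumLargest lam p) :
    ∃ σ : Equiv.Perm (Fin n), ∑ i, c i * lam (σ i) ≤ ∑ i, c i * μ i := by
  set π := Tuple.sort c with hπ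
  set ρμ := Tuple.sort μ
  set rlam := Tuple.sort lam
  set a : Fin n → ℝ := c ∘ π with ha
  have haMono : Monotone a := Tuple.monotone_sort c
  set μd : Fin n → ℝ := fun k => μ (ρμ k.rev) with hμd
  set ld : Fin n → ℝ := fun k => lam (rlam k.rev) with hld
  have hμdAnti : Antitone μd := by
    intro k l hkl
    exact Tuple.monotone_sort μ (by simpa [Fin.rev_le_rev] using hkl)
  have hldAnti : Antitone ld := by
    intro k l hkl
    exact Tuple.monotone_sort lam (by simpa [Fin.rev_le_rev] using hkl)
  have hμdEq : μd = μ ∘ (Fin.revPerm.trans ρμ) := rfl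
  have hldEq : ld = lam ∘ (Fin.revPerm.trans rlam) := rfl
  set d : Fin n → ℝ := fun k => ld k - μd k with hd
  have hD : ∀ (p : ℕ) (hp : p ≤ n), 1 ≤ p → 0 ≤ ∑ j : Fin p, d (Fin.castLE hp j) := by
    intro p hp hp1
    have h1 : ∑ j : Fin p, ld (Fin.castLE hp j) = sumLargest lam p := by
      rw [← antitone_sumLargest_eq hldAnti hp, hldEq, sumLargest_comp_equiv]
    have h2 : ∑ j : Fin p, μd (Fin.castLE hp j) = sumLargest μ p := by
      rw [← antitone_sumLargest_eq hμdAnti hp, hμdEq, sumLargest_comp_equiv]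
    have := hmaj p hp1 hp
    simp only [hd, Finset.sum_sub_distrib, h1, h2]
    linarith
  have hDn : ∑ j, d j = 0 := by
    have h1 : ∑ j, ld j = ∑ i, lam i := by
      rw [hldEq]; exact Equiv.sum_comp _ lam
    have h2 : ∑ j, μd j = ∑ i, μ i := by
      rw [hμdEq]; exact Equiv.sum_comp _ μ
    simp only [hd, Finset.sum_sub_distrib, h1, h2, hsum, sub_self]
  have habel := abel_pairing_nonpos haMono hD hDn
  have hstep1 : ∑ k, a k * ld k ≤ ∑ k, a k * μd k := by
    have : ∑ k, a k * d k = ∑ k, a k * ld k - ∑ k, a k * μd k := by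
      simp only [hd, mul_sub, Finset.sum_sub_distrib]
    linarith [this ▸ habel]
  have hstep2 : ∑ k, a k * μd k ≤ ∑ i, c i * μ i := by
    set τ : Equiv.Perm (Fin n) := (π.trans ρμ.symm).trans Fin.revPerm.symm with hτ
    have hav : Antivary a μd := haMono.antivary hμdAnti
    have := hav.sum_mul_le_sum_mul_comp_perm (σ := τ)
    refine le_trans this (le_of_eq ?_)
    have hcomp : ∀ k, μd (τ k) = μ (π k) := by
      intro k
      simp [hμd, hτ, Fin.rev_rev]
    calc ∑ k, a k * μd (τ k) = ∑ k, c (π k) * μ (π k) := by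
          refine Finset.sum_congr rfl fun k _ => ?_
          rw [hcomp k]; rfl
      _ = ∑ i, c i * μ i := Equiv.sum_comp π (fun i => c i * μ i)
  refine ⟨π.symm.trans (Fin.revPerm.trans rlam), ?_⟩
  have hσ₀ : ∑ i, c i * lam ((π.symm.trans (Fin.revPerm.trans rlam)) i) = ∑ k, a k * ld k := by
    rw [← Equiv.sum_comp π (fun i => c i * lam ((π.symm.trans (Fin.revPerm.trans rlam)) i))]
    refine Finset.sum_congr rfl fun k _ => ?_
    simp [ha, hld]
  rw [hσ₀]
  linarith

/-- Hardy–Littlewood–Pólya / Rado: majorization implies membership in the permutohedron. -/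
private lemma mem_convexHull_perms {n : ℕ} {μ lam : Fin n → ℝ}
    (hsum : ∑ i, μ i = ∑ i, lam i)
    (hmaj : ∀ p : ℕ, 1 ≤ p → p ≤ n → sumLargest μ p ≤ sumLargest lam p) :
    μ ∈ convexHull ℝ {x : Fin n → ℝ | ∃ σ : Equiv.Perm (Fin n), x = lam ∘ σ} := by
  set T : Set (Fin n → ℝ) := {x | ∃ σ : Equiv.Perm (Fin n), x = lam ∘ σ} with hT
  have hTfin : T.Finite := by
    have : T = Set.range (fun σ : Equiv.Perm (Fin n) => lam ∘ σ) := by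
      ext x; simp [hT, eq_comm, Set.range]
    rw [this]
    exact Set.finite_range _
  by_contra hμ
  obtain ⟨f, u, hfu, hub⟩ := geometric_hahn_banach_point_closed
    (convex_convexHull ℝ T) (hTfin.isClosed_convexHull ℝ) hμ
  set c : Fin n → ℝ := fun i => f (Pi.single i 1) with hc
  have hf : ∀ x : Fin n → ℝ, f x = ∑ i, x i * c i := by
    intro x
    have hx : x = ∑ i, x i • (Pi.single i 1 : Fin n → ℝ) := by
      ext j
      simp [Pi.single_apply]
    conv_lhs => rw [hx]
    rw [map_sum]
    simp [hc, smul_eq_mul]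
  obtain ⟨σ, hσ⟩ := exists_perm_sum_le c μ lam hsum hmaj
  have hmem : lam ∘ σ ∈ convexHull ℝ T := subset_convexHull ℝ T ⟨σ, rfl⟩
  have h1 : u < f (lam ∘ σ) := hub _ hmem
  have h2 : f (lam ∘ σ) = ∑ i, c i * lam (σ i) := by
    rw [hf]; exact Finset.sum_congr rfl fun i _ => mul_comm _ _
  have h3 : f μ = ∑ i, c i * μ i := by
    rw [hf]; exact Finset.sum_congr rfl fun i _ => mul_comm _ _
  rw [h2] at h1
  rw [h3] at hfu
  linarith

/- ### Matrix lemmas -/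

private lemma real_spectral {n : ℕ} (X : Matrix (Fin n) (Fin n) ℝ) (hX : X.IsHermitian) :
    X = (hX.eigenvectorUnitary : Matrix (Fin n) (Fin n) ℝ) * diagonal hX.eigenvalues
      * (hX.eigenvectorUnitary : Matrix (Fin n) (Fin n) ℝ)ᵀ :=
  hX.spectral_theorem.trans (by
    have h : RCLike.ofReal ∘ hX.eigenvalues = hX.eigenvalues := by ext i; simp
    rw [Unitary.conjStarAlgAut_apply, Matrix.star_eq_conjTranspose, Matrix.conjTranspose_eq_transpose_of_trivial, h])

private lemma orth_pair {n : ℕ} {g : Matrix (Fin n) (Fin n) ℝ}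
    (hg : g ∈ Matrix.orthogonalGroup (Fin n) ℝ) : g * gᵀ = 1 ∧ gᵀ * g = 1 := by
  constructor
  · have := (Matrix.mem_orthogonalGroup_iff (Fin n) ℝ).mp hg
    exact this
  · have := (Matrix.mem_orthogonalGroup_iff' (Fin n) ℝ).mp hg
    exact this

private lemma mem_orth_of {n : ℕ} {g : Matrix (Fin n) (Fin n) ℝ} (h : g * gᵀ = 1) :
    g ∈ Matrix.orthogonalGroup (Fin n) ℝ := by
  rw [Matrix.mem_orthogonalGroup_iff]
  exact h

private lemma transpose_mem_orth {n : ℕ} {g : Matrix (Fin n) (Fin n) ℝ}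
    (hg : g ∈ Matrix.orthogonalGroup (Fin n) ℝ) :
    gᵀ ∈ Matrix.orthogonalGroup (Fin n) ℝ := by
  refine mem_orth_of ?_
  rw [transpose_transpose]
  exact (orth_pair hg).2

private noncomputable def indMat {n : ℕ} (s : Finset (Fin n)) : Matrix (Fin n) (Fin n) ℝ :=
  diagonal (fun j => if j ∈ s then (1 : ℝ) else 0)

/-- Fan-type bound: `tr (diag d · (A Iₛ Aᵀ)) ≤ sumLargest d p` for orthogonal `A`. -/
private lemma trace_diag_conj_ind_le {n p : ℕ} (d : Fin n → ℝ) (A : Matrix (Fin n) (Fin n) ℝ)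
    (hA1 : A * Aᵀ = 1) (hA2 : Aᵀ * A = 1) (s : Finset (Fin n)) (hs : s.card = p)
    (hp1 : 1 ≤ p) (hpn : p ≤ n) :
    trace (diagonal d * (A * indMat s * Aᵀ)) ≤ sumLargest d p := by
  set w : Fin n → ℝ := fun i => ∑ j ∈ s, (A i j) ^ 2 with hw
  have htr : trace (diagonal d * (A * indMat s * Aᵀ)) = ∑ i, d i * w i := by
    rw [trace]
    refine Finset.sum_congr rfl fun i _ => ?_
    rw [diag_apply, Matrix.diagonal_mul]
    congr 1
    rw [Matrix.mul_apply]
    calc ∑ j : Fin n, (A * indMat s) i j * Aᵀ j i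
        = ∑ j : Fin n, (if j ∈ s then A i j ^ 2 else 0) := by
          refine Finset.sum_congr rfl fun j _ => ?_
          rw [indMat, Matrix.mul_diagonal, transpose_apply]
          by_cases hj : j ∈ s
          · simp [hj]; ring
          · simp [hj]
      _ = ∑ j ∈ s, A i j ^ 2 := by rw [Finset.sum_ite_mem, Finset.univ_inter]
  have hrow : ∀ i, ∑ j, A i j ^ 2 = 1 := by
    intro i
    have h := congrFun (congrFun hA1 i) i
    rw [Matrix.mul_apply, Matrix.one_apply_eq] at h
    rw [← h]
    exact Finset.sum_congr rfl fun j _ => by rw [transpose_apply]; ring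
  have hcol : ∀ j, ∑ i, A i j ^ 2 = 1 := by
    intro j
    have h := congrFun (congrFun hA2 j) j
    rw [Matrix.mul_apply, Matrix.one_apply_eq] at h
    rw [← h]
    exact Finset.sum_congr rfl fun i _ => by rw [transpose_apply]; ring
  have hw0 : ∀ i, 0 ≤ w i := fun i => Finset.sum_nonneg fun j _ => sq_nonneg _
  have hw1 : ∀ i, w i ≤ 1 := by
    intro i
    rw [hw, ← hrow i]
    exact Finset.sum_le_sum_of_subset_of_nonneg (Finset.subset_univ s)
      fun j _ _ => sq_nonneg _
  have hwsum : ∑ i, w i = p := by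
    rw [hw, Finset.sum_comm, Finset.sum_congr rfl fun j _ => hcol j]
    simp [hs]
  rw [htr]
  have := weighted_sum_le_sumLargest (f := d) hw0 hw1 hp1 (by simpa using hpn) hwsum
  refine le_trans (le_of_eq ?_) this
  exact Finset.sum_congr rfl fun i _ => mul_comm _ _

private lemma permMatrix_orth {n : ℕ} (σ : Equiv.Perm (Fin n)) :
    (σ.permMatrix ℝ) * (σ.permMatrix ℝ)ᵀ = 1 := by
  rw [← PEquiv.toMatrix_symm, ← Equiv.toPEquiv_symm, ← PEquiv.toMatrix_trans,
    ← Equiv.toPEquiv_trans, Equiv.self_trans_symm, Equiv.toPEquiv_refl, PEquiv.toMatrix_refl]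

private lemma permMatrix_conj_diag {n : ℕ} (σ : Equiv.Perm (Fin n)) (d : Fin n → ℝ) :
    (σ.permMatrix ℝ) * diagonal d * (σ.permMatrix ℝ)ᵀ = diagonal (d ∘ σ) := by
  rw [Equiv.Perm.permMatrix, PEquiv.toMatrix_toPEquiv_mul, ← PEquiv.toMatrix_symm,
    ← Equiv.toPEquiv_symm, PEquiv.mul_toMatrix_toPEquiv]
  ext i j
  simp only [submatrix_apply, id_eq, Equiv.symm_symm, diagonal_apply, Function.comp_apply]
  by_cases h : i = j
  · simp [h]
  · rw [if_neg h, if_neg (fun hc => h (σ.injective hc))]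

private lemma cancel_tv {n : ℕ} {V : Matrix (Fin n) (Fin n) ℝ} (h : Vᵀ * V = 1)
    (Z : Matrix (Fin n) (Fin n) ℝ) : Vᵀ * (V * Z) = Z := by
  rw [← Matrix.mul_assoc, h, Matrix.one_mul]

/-- Let `X`, `Y` be real symmetric `n × n` matrices. Then `Y` lies in the convex
hull of `{g X gᵀ : g ∈ O(n)}` iff `tr Y = tr X` and for every `p = 1, …, n` the sum of the `p`
largest eigenvalues of `Y` is at most the sum of the `p` largest eigenvalues of `X`. -/
theorem mem_schurHorn_orbitope_iff
    {n : ℕ} (X Y : Matrix (Fin n) (Fin n) ℝ)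
    (hX : X.IsHermitian) (hY : Y.IsHermitian) :
    Y ∈ convexHull ℝ {m : Matrix (Fin n) (Fin n) ℝ |
        ∃ g ∈ Matrix.orthogonalGroup (Fin n) ℝ, m = g * X * gᵀ} ↔
      Y.trace = X.trace ∧
        ∀ p : ℕ, 1 ≤ p → p ≤ n →
          sumLargest hY.eigenvalues p ≤ sumLargest hX.eigenvalues p := by
  set S : Set (Matrix (Fin n) (Fin n) ℝ) :=
    {m | ∃ g ∈ Matrix.orthogonalGroup (Fin n) ℝ, m = g * X * gᵀ} with hS
  set U : Matrix (Fin n) (Fin n) ℝ := (hX.eigenvectorUnitary : Matrix (Fin n) (Fin n) ℝ) with hUdef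
  set V : Matrix (Fin n) (Fin n) ℝ := (hY.eigenvectorUnitary : Matrix (Fin n) (Fin n) ℝ) with hVdef
  have hUmem : U ∈ Matrix.orthogonalGroup (Fin n) ℝ := hX.eigenvectorUnitary.2
  have hVmem : V ∈ Matrix.orthogonalGroup (Fin n) ℝ := hY.eigenvectorUnitary.2
  obtain ⟨hU1, hU2⟩ := orth_pair hUmem
  obtain ⟨hV1, hV2⟩ := orth_pair hVmem
  set lam := hX.eigenvalues with hlam
  set μ := hY.eigenvalues with hμ
  have hXspec : X = U * diagonal lam * Uᵀ := real_spectral X hX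
  have hYspec : Y = V * diagonal μ * Vᵀ := real_spectral Y hY
  constructor
  · intro h
    constructor
    · -- traces agree
      have hsub : S ⊆ {M : Matrix (Fin n) (Fin n) ℝ | trace M = trace X} := by
        rintro M ⟨g, hg, rfl⟩
        show trace (g * X * gᵀ) = trace X
        rw [Matrix.trace_mul_cycle, (orth_pair hg).2, Matrix.one_mul]
      have hconv : Convex ℝ {M : Matrix (Fin n) (Fin n) ℝ | trace M = trace X} := by
        have hlin : IsLinearMap ℝ (trace : Matrix (Fin n) (Fin n) ℝ → ℝ) :=
          ⟨trace_add, fun c M => trace_smul c M⟩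
        exact convex_hyperplane hlin _
      exact convexHull_min hsub hconv h
    · intro p hp1 hpn
      obtain ⟨s, hs, hmaxμ⟩ := exists_sumLargest_eq (f := μ) (p := p) (by simpa using hpn)
      set P : Matrix (Fin n) (Fin n) ℝ := V * indMat s * Vᵀ with hP
      have hφlin : IsLinearMap ℝ (fun M : Matrix (Fin n) (Fin n) ℝ => trace (P * M)) := by
        constructor
        · intro M N; rw [Matrix.mul_add, trace_add]
        · intro c M; rw [Matrix.mul_smul, trace_smul]
      have hsub : S ⊆ {M : Matrix (Fin n) (Fin n) ℝ | trace (P * M) ≤ sumLargest lam p} := by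
        rintro M ⟨g, hg, rfl⟩
        set A : Matrix (Fin n) (Fin n) ℝ := Uᵀ * gᵀ * V with hA
        have hAmem : A ∈ Matrix.orthogonalGroup (Fin n) ℝ :=
          Submonoid.mul_mem _
            (Submonoid.mul_mem _ (transpose_mem_orth hUmem) (transpose_mem_orth hg)) hVmem
        obtain ⟨hA1, hA2⟩ := orth_pair hAmem
        have key : trace (P * (g * X * gᵀ)) = trace (diagonal lam * (A * indMat s * Aᵀ)) := by
          conv_lhs => rw [hXspec]
          have e1 : P * (g * (U * diagonal lam * Uᵀ) * gᵀ)
              = (V * indMat s) * (Vᵀ * (g * (U * (diagonal lam * (Uᵀ * gᵀ))))) := by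
            rw [hP]; simp only [Matrix.mul_assoc]
          have e2 : diagonal lam * (A * indMat s * Aᵀ)
              = (diagonal lam * (Uᵀ * (gᵀ * (V * indMat s)))) * (Vᵀ * (g * U)) := by
            rw [hA]
            simp only [Matrix.transpose_mul, Matrix.transpose_transpose, Matrix.mul_assoc]
          rw [e1, e2, Matrix.trace_mul_comm (V * indMat s),
            Matrix.trace_mul_comm (diagonal lam * (Uᵀ * (gᵀ * (V * indMat s))))]
          simp only [Matrix.mul_assoc]
        rw [Set.mem_setOf_eq, key]
        exact trace_diag_conj_ind_le lam A hA1 hA2 s hs hp1 hpn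
      have hle := convexHull_min hsub (convex_halfSpace_le hφlin _) h
      have hach : trace (P * Y) = ∑ i ∈ s, μ i := by
        conv_lhs => rw [hYspec]
        have e1 : P * (V * diagonal μ * Vᵀ)
            = V * (indMat s * (Vᵀ * (V * (diagonal μ * Vᵀ)))) := by
          rw [hP]; simp only [Matrix.mul_assoc]
        rw [e1, cancel_tv hV2, Matrix.trace_mul_comm]
        simp only [Matrix.mul_assoc]
        rw [hV2, Matrix.mul_one, indMat, Matrix.diagonal_mul_diagonal, Matrix.trace_diagonal]
        simp only [ite_mul, one_mul, zero_mul]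
        rw [Finset.sum_ite_mem, Finset.univ_inter]
      rw [hmaxμ, ← hach]
      exact hle
  · rintro ⟨htr, hmaj⟩
    have hsum : ∑ i, μ i = ∑ i, lam i := by
      have hXtr : X.trace = ∑ i, lam i := by
        conv_lhs => rw [hXspec]
        rw [Matrix.trace_mul_cycle, hU2, Matrix.one_mul, Matrix.trace_diagonal]
      have hYtr : Y.trace = ∑ i, μ i := by
        conv_lhs => rw [hYspec]
        rw [Matrix.trace_mul_cycle, hV2, Matrix.one_mul, Matrix.trace_diagonal]
      rw [← hXtr, ← hYtr, htr]
    have hμhull := mem_convexHull_perms hsum hmaj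
    have hdlin : IsLinearMap ℝ (diagonal : (Fin n → ℝ) → Matrix (Fin n) (Fin n) ℝ) := by
      constructor
      · intro x y; ext i j
        by_cases hij : i = j <;> simp [diagonal_apply, hij]
      · intro c x; ext i j
        by_cases hij : i = j <;> simp [diagonal_apply, hij]
    have hdiag : diagonal μ ∈ convexHull ℝ
        (diagonal '' {x : Fin n → ℝ | ∃ σ : Equiv.Perm (Fin n), x = lam ∘ σ}) := by
      rw [← hdlin.image_convexHull]
      exact Set.mem_image_of_mem _ hμhull
    set L : Matrix (Fin n) (Fin n) ℝ → Matrix (Fin n) (Fin n) ℝ := fun M => V * M * Vᵀ with hL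
    have hLlin : IsLinearMap ℝ L := by
      constructor
      · intro M N; simp only [hL, Matrix.mul_add, Matrix.add_mul]
      · intro c M; simp only [hL, Matrix.mul_smul, Matrix.smul_mul]
    have hYin : Y ∈ convexHull ℝ
        (L '' (diagonal '' {x : Fin n → ℝ | ∃ σ : Equiv.Perm (Fin n), x = lam ∘ σ})) := by
      rw [← hLlin.image_convexHull, hYspec]
      exact Set.mem_image_of_mem _ hdiag
    refine convexHull_mono ?_ hYin
    rintro _ ⟨_, ⟨x, ⟨σ, rfl⟩, rfl⟩, rfl⟩
    refine ⟨V * σ.permMatrix ℝ * Uᵀ, ?_, ?_⟩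
    · exact Submonoid.mul_mem _
        (Submonoid.mul_mem _ hVmem (mem_orth_of (permMatrix_orth σ))) (transpose_mem_orth hUmem)
    · simp only [hL]
      rw [← permMatrix_conj_diag σ lam]
      conv_rhs => rw [hXspec]
      simp only [Matrix.transpose_mul, Matrix.transpose_transpose, Matrix.mul_assoc]
      rw [cancel_tv hU2, cancel_tv hU2]
end

section
/- Fix n ≥ 1 and M ∈ Mat_n(ℝ). Let e : Mat_n(ℝ) → Mat_{2n+1}(ℝ) be the injective linear map sending B to the symmetric matrix B₀ whose top-right n×n corner (rows 1,…,n, columns n+2,…,2n+1) equals B, whose bottom-left corner equals Bᵀ, and all of whose other entries are zero (in particular the (n+1)-st row and column of B₀ are zero). Let K := {diag(u, v) : u ∈ SO(n+1), v ∈ SO(n)} ⊆ SO(2n+1), embedded block-diagonally, which acts on Mat_{2n+1}(ℝ) by conjugation. Then e(convexHull{g M hᵀ : g, h ∈ O(n)}) = convexHull{k (e M) kᵀ : k ∈ K} ∩ range(e). In other words, identifying Mat_n(ℝ) with its image under e, the Fan orbitope C_M := convexHull{g M hᵀ : g, h ∈ O(n)} equals the intersection of the polar orbitope O_{M₀} :=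 convexHull{k M₀ kᵀ : k ∈ K} with Mat_n(ℝ), where M₀ = e(M). -/
open Matrix

/-- The injective linear embedding `B ↦ B₀` of `n × n` matrices into symmetric
`(2n+1) × (2n+1)` matrices: the top-right `n × n` corner is `B`, the bottom-left corner is
`Bᵀ`, and all other entries (in particular the whole middle row and column) are zero.
The row/column index set `(Fin n ⊕ Fin 1) ⊕ Fin n` plays the role of `Fin (2n+1)`,
grouped so that the first block has size `n + 1`. -/
def matEmb {n : ℕ} (B : Matrix (Fin n) (Fin n) ℝ) :
    Matrix ((Fin n ⊕ Fin 1) ⊕ Fin n) ((Fin n ⊕ Fin 1) ⊕ Fin n) ℝ :=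
  Matrix.fromBlocks 0 (Matrix.fromRows B 0) (Matrix.fromRows B 0)ᵀ 0

section Aux
variable {n : ℕ}

lemma star_eq_transpose' {m : Type*} (A : Matrix m m ℝ) : star A = Aᵀ := by
  ext i j
  simp [Matrix.star_apply]

lemma vecMulVec_transpose' (z w : Fin n → ℝ) : (vecMulVec z w)ᵀ = vecMulVec w z := by
  ext i j
  simp [vecMulVec_apply, mul_comm]

lemma vecMulVec_mul_vecMulVec' (z w : Fin n → ℝ) :
    vecMulVec z w * vecMulVec z w = (w ⬝ᵥ z) • vecMulVec z w := by
  ext i j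
  simp only [mul_apply, vecMulVec_apply, Matrix.smul_apply, smul_eq_mul, dotProduct,
    Finset.sum_mul, Finset.mul_sum]
  exact Finset.sum_congr rfl fun k _ => by ring

lemma refl_mem (z : Fin n → ℝ) :
    (1 - (2 / (z ⬝ᵥ z)) • vecMulVec z z) ∈ Matrix.orthogonalGroup (Fin n) ℝ := by
  rcases eq_or_ne (z ⬝ᵥ z) 0 with h | h
  · simp only [h, div_zero, zero_smul, sub_zero]
    exact Submonoid.one_mem _
  · rw [Matrix.mem_unitaryGroup_iff, star_eq_transpose']
    have ht : (1 - (2 / (z ⬝ᵥ z)) • vecMulVec z z)ᵀ = 1 - (2 / (z ⬝ᵥ z)) • vecMulVec z z := by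
      rw [transpose_sub, transpose_one, transpose_smul, vecMulVec_transpose']
    rw [ht]
    set c : ℝ := 2 / (z ⬝ᵥ z) with hc
    have expand : (1 - c • vecMulVec z z) * (1 - c • vecMulVec z z)
        = 1 - (2 * c) • vecMulVec z z + (c * c) • (vecMulVec z z * vecMulVec z z) := by
      simp only [sub_mul, mul_sub, one_mul, mul_one, smul_mul_assoc, mul_smul_comm, smul_smul]
      module
    rw [expand, vecMulVec_mul_vecMulVec', smul_smul]
    have : c * c * (z ⬝ᵥ z) = 2 * c := by
      rw [hc]; field_simp
    rw [this]
    module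

lemma refl_det (z : Fin n → ℝ) (hz : z ⬝ᵥ z = 1) :
    (1 - (2 / (z ⬝ᵥ z)) • vecMulVec z z).det = -1 := by
  have h2 : 2 / (z ⬝ᵥ z) = (2:ℝ) := by rw [hz]; norm_num
  rw [h2]
  have hcr : replicateCol (Fin 1) ((-2:ℝ) • z) * replicateRow (Fin 1) z = (-2:ℝ) • vecMulVec z z := by
    ext i j
    simp [Matrix.mul_apply, Matrix.replicateCol_apply, Matrix.replicateRow_apply, vecMulVec_apply]
    ring
  have hrw : (1 : Matrix (Fin n) (Fin n) ℝ) - (2:ℝ) • vecMulVec z z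
      = 1 + replicateCol (Fin 1) ((-2:ℝ) • z) * replicateRow (Fin 1) z := by
    rw [hcr]; module
  erw [hrw, det_one_add_replicateCol_mul_replicateRow, dotProduct_smul, hz]
  norm_num

lemma toBlocks_one₁₁ {l m : Type*} [DecidableEq l] [DecidableEq m] [Zero ℝ] :
    (1 : Matrix (l ⊕ m) (l ⊕ m) ℝ).toBlocks₁₁ = 1 := by
  rw [← fromBlocks_one, toBlocks_fromBlocks₁₁]

lemma toBlocks_one₂₂ {l m : Type*} [DecidableEq l] [DecidableEq m] :
    (1 : Matrix (l ⊕ m) (l ⊕ m) ℝ).toBlocks₂₂ = 1 := by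
  rw [← fromBlocks_one, toBlocks_fromBlocks₂₂]

lemma toBlocks_one₁₂ {l m : Type*} [DecidableEq l] [DecidableEq m] :
    (1 : Matrix (l ⊕ m) (l ⊕ m) ℝ).toBlocks₁₂ = 0 := by
  rw [← fromBlocks_one, toBlocks_fromBlocks₁₂]

lemma toBlocks_one₂₁ {l m : Type*} [DecidableEq l] [DecidableEq m] :
    (1 : Matrix (l ⊕ m) (l ⊕ m) ℝ).toBlocks₂₁ = 0 := by
  rw [← fromBlocks_one, toBlocks_fromBlocks₂₁]

lemma corner_mem_convexHull (u : Matrix (Fin n ⊕ Fin 1) (Fin n ⊕ Fin 1) ℝ)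
    (hu : u ∈ Matrix.orthogonalGroup (Fin n ⊕ Fin 1) ℝ) :
    u.toBlocks₁₁ ∈ convexHull ℝ {g : Matrix (Fin n) (Fin n) ℝ |
      g ∈ Matrix.orthogonalGroup (Fin n) ℝ} := by
  set a := u.toBlocks₁₁ with ha
  set b := u.toBlocks₁₂ with hb
  set c := u.toBlocks₂₁ with hc
  set d := u.toBlocks₂₂ with hd
  have hu1 : u * uᵀ = 1 := by
    have := Matrix.mem_unitaryGroup_iff.mp hu; rwa [star_eq_transpose'] at this
  have hu2 : uᵀ * u = 1 := by
    have := Matrix.mem_unitaryGroup_iff'.mp hu; rwa [star_eq_transpose'] at this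
  have hus : u = fromBlocks a b c d := (fromBlocks_toBlocks u).symm
  rw [hus, fromBlocks_transpose, fromBlocks_multiply] at hu1 hu2
  have R1 : a * aᵀ + b * bᵀ = 1 := by
    have := congrArg Matrix.toBlocks₁₁ hu1; simpa [toBlocks_one₁₁] using this
  have R2 : a * cᵀ + b * dᵀ = 0 := by
    have := congrArg Matrix.toBlocks₁₂ hu1; simpa [toBlocks_one₁₂] using this
  have R3 : c * aᵀ + d * bᵀ = 0 := by
    have := congrArg Matrix.toBlocks₂₁ hu1; simpa [toBlocks_one₂₁] using this
  have R4 : c * cᵀ + d * dᵀ = 1 := by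
    have := congrArg Matrix.toBlocks₂₂ hu1; simpa [toBlocks_one₂₂] using this
  have R5 : aᵀ * a + cᵀ * c = 1 := by
    have := congrArg Matrix.toBlocks₁₁ hu2; simpa [toBlocks_one₁₁] using this
  set δ := d 0 0 with hδdef
  have hdT : dᵀ = d := by ext i j; fin_cases i; fin_cases j; rfl
  have hdd : d = δ • (1 : Matrix (Fin 1) (Fin 1) ℝ) := by
    ext i j; fin_cases i; fin_cases j; simp [hδdef]
  have hcc0 : (c * cᵀ) 0 0 = (fun k => c 0 k) ⬝ᵥ (fun k => c 0 k) := by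
    simp [Matrix.mul_apply, dotProduct]
  have hccnn : 0 ≤ (c * cᵀ) 0 0 := by
    rw [hcc0]; exact Finset.sum_nonneg fun k _ => mul_self_nonneg _
  have hδsq : (c * cᵀ) 0 0 + δ * δ = 1 := by
    have h00 : (c * cᵀ + d * dᵀ) 0 0 = (1 : Matrix (Fin 1) (Fin 1) ℝ) 0 0 := by rw [R4]
    have hddT : (d * dᵀ) 0 0 = δ * δ := by
      rw [hdT]; simp [Matrix.mul_apply, hδdef]
    simpa [Matrix.add_apply, hddT, Matrix.one_apply] using h00
  have hδle : -1 ≤ δ ∧ δ ≤ 1 := by constructor <;> nlinarith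
  by_cases hone : 1 - δ * δ = 0
  · -- boundary case : c = 0 and a is itself orthogonal
    have hc0 : c = 0 := by
      have hz : (fun k => c 0 k) ⬝ᵥ (fun k => c 0 k) = 0 := by
        rw [← hcc0]; linarith
      have := dotProduct_self_eq_zero.mp hz
      ext i j; fin_cases i; exact congrFun this j
    have R5' : aᵀ * a = 1 := by
      rw [hc0] at R5; simpa using R5
    refine subset_convexHull ℝ _ ?_
    rw [Set.mem_setOf_eq, Matrix.mem_unitaryGroup_iff', star_eq_transpose']
    exact R5'
  · rw [show (1:ℝ) - δ * δ = (1 - δ) * (1 + δ) from by ring] at hone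
    obtain ⟨h1m, h1p⟩ := mul_ne_zero_iff.mp hone
    have hfac : (1:ℝ) - δ * δ = (1 - δ) * (1 + δ) := by ring
    set P := b * bᵀ with hP
    have hbdT : b * dᵀ = δ • b := by
      rw [hdT, hdd, Matrix.mul_smul, Matrix.mul_one]
    have hacT : a * cᵀ = -(δ • b) := by
      rw [← hbdT, ← neg_eq_of_add_eq_zero_left R2]  -- careful direction
    have hdbT : d * bᵀ = δ • bᵀ := by
      rw [hdd, Matrix.smul_mul, Matrix.one_mul]
    have hcaT : c * aᵀ = -(δ • bᵀ) := by
      rw [← hdbT, ← neg_eq_of_add_eq_zero_left R3]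
    have hccT : c * cᵀ = (1 - δ * δ) • (1 : Matrix (Fin 1) (Fin 1) ℝ) := by
      have hddT : d * dᵀ = (δ * δ) • 1 := by
        rw [hdT, hdd, Matrix.smul_mul, Matrix.mul_smul, smul_smul, Matrix.one_mul]
      have : c * cᵀ = 1 - d * dᵀ := eq_sub_of_add_eq R4
      rw [this, hddT]; module
    have haaT : a * aᵀ = 1 - P := eq_sub_of_add_eq R1
    have f2 : a * (cᵀ * bᵀ) = -(δ • P) := by
      rw [← Matrix.mul_assoc, hacT, hP, Matrix.neg_mul, Matrix.smul_mul]
    have f3 : (b * c) * aᵀ = -(δ • P) := by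
      rw [Matrix.mul_assoc, hcaT, hP, Matrix.mul_neg, Matrix.mul_smul]
    have f4 : (b * c) * (cᵀ * bᵀ) = (1 - δ * δ) • P := by
      rw [Matrix.mul_assoc, ← Matrix.mul_assoc c, hccT, Matrix.smul_mul, Matrix.one_mul,
        Matrix.mul_smul]
    have key : ∀ t : ℝ, t * t * (1 - δ * δ) - 2 * t * δ - 1 = 0 →
        (a + t • (b * c)) ∈ Matrix.orthogonalGroup (Fin n) ℝ := by
      intro t ht
      rw [Matrix.mem_unitaryGroup_iff, star_eq_transpose', transpose_add, transpose_smul,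
        transpose_mul, add_mul, mul_add, mul_add, Matrix.mul_smul, Matrix.smul_mul,
        Matrix.smul_mul, Matrix.mul_smul, smul_smul, haaT, f2, f3, f4]
      calc 1 - P + t • -(δ • P) + (t • -(δ • P) + (t * t) • (1 - δ * δ) • P)
          = 1 + (t * t * (1 - δ * δ) - 2 * t * δ - 1) • P := by module
        _ = 1 := by rw [ht, zero_smul, add_zero]
    have hg₁ := key (1 / (1 - δ)) (by field_simp; ring)
    have hg₂ := key (-(1 / (1 + δ))) (by field_simp; ring)

    have combo : ((1 - δ)/2) • (a + (1 / (1 - δ)) • (b * c))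
        + ((1 + δ)/2) • (a + (-(1 / (1 + δ))) • (b * c)) = a := by
      match_scalars <;> field_simp <;> ring
    have hseg : a ∈ segment ℝ (a + (1 / (1 - δ)) • (b * c)) (a + (-(1 / (1 + δ))) • (b * c)) :=
      ⟨(1 - δ)/2, (1 + δ)/2, by linarith [hδle.2], by linarith [hδle.1], by ring, combo⟩
    exact segment_subset_convexHull hg₁ hg₂ hseg

section Aux2
variable {n : ℕ}

noncomputable def matEmbL (n : ℕ) : Matrix (Fin n) (Fin n) ℝ →ₗ[ℝ]
    Matrix ((Fin n ⊕ Fin 1) ⊕ Fin n) ((Fin n ⊕ Fin 1) ⊕ Fin n) ℝ where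
  toFun := matEmb
  map_add' A B := by
    ext i j
    rcases i with (i | i) | i <;> rcases j with (j | j) | j <;>
      simp [matEmb, Matrix.add_apply]
  map_smul' r A := by
    ext i j
    rcases i with (i | i) | i <;> rcases j with (j | j) | j <;>
      simp [matEmb, Matrix.smul_apply]

noncomputable def projL (n : ℕ) :
    Matrix ((Fin n ⊕ Fin 1) ⊕ Fin n) ((Fin n ⊕ Fin 1) ⊕ Fin n) ℝ →ₗ[ℝ]
      Matrix (Fin n) (Fin n) ℝ where
  toFun X := Matrix.of fun i j => X (Sum.inl (Sum.inl i)) (Sum.inr j)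
  map_add' _ _ := rfl
  map_smul' _ _ := rfl

lemma projL_matEmb (B : Matrix (Fin n) (Fin n) ℝ) : projL n (matEmb B) = B := by
  ext i j
  simp [projL, matEmb, LinearMap.coe_mk, AddHom.coe_mk]
  rfl

lemma conj_matEmb (M : Matrix (Fin n) (Fin n) ℝ)
    (u : Matrix (Fin n ⊕ Fin 1) (Fin n ⊕ Fin 1) ℝ) (v : Matrix (Fin n) (Fin n) ℝ) :
    fromBlocks u 0 0 v * matEmb M * (fromBlocks u 0 0 v)ᵀ
      = fromBlocks 0 (u * (fromRows M 0 : Matrix (Fin n ⊕ Fin 1) (Fin n) ℝ) * vᵀ) (v * (fromRows M 0 : Matrix (Fin n ⊕ Fin 1) (Fin n) ℝ)ᵀ * uᵀ) 0 := by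
  simp [matEmb, fromBlocks_transpose, fromBlocks_multiply, Matrix.mul_assoc]

lemma projL_conj (M : Matrix (Fin n) (Fin n) ℝ)
    (u : Matrix (Fin n ⊕ Fin 1) (Fin n ⊕ Fin 1) ℝ) (v : Matrix (Fin n) (Fin n) ℝ) :
    projL n (fromBlocks u 0 0 v * matEmb M * (fromBlocks u 0 0 v)ᵀ)
      = u.toBlocks₁₁ * M * vᵀ := by
  rw [conj_matEmb]
  have hu : u = fromBlocks u.toBlocks₁₁ u.toBlocks₁₂ u.toBlocks₂₁ u.toBlocks₂₂ :=
    (fromBlocks_toBlocks u).symm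
  ext i j
  rw [Matrix.mul_assoc]
  nth_rewrite 1 [hu]
  simp [projL, fromBlocks_mul_fromRows, Matrix.mul_assoc]
  rfl

lemma conj_matEmb_blockdiag (M : Matrix (Fin n) (Fin n) ℝ)
    (g : Matrix (Fin n) (Fin n) ℝ) (e : Matrix (Fin 1) (Fin 1) ℝ)
    (v : Matrix (Fin n) (Fin n) ℝ) :
    fromBlocks (fromBlocks g 0 0 e) 0 0 v * matEmb M
        * (fromBlocks (fromBlocks g 0 0 e) 0 0 v)ᵀ
      = matEmb (g * M * vᵀ) := by
  rw [conj_matEmb]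
  have h1 : fromBlocks g 0 0 e * fromRows M (0 : Matrix (Fin 1) (Fin n) ℝ)
      = fromRows (g * M) 0 := by
    rw [fromBlocks_mul_fromRows]
    simp
  have h2 : fromBlocks g 0 0 e * fromRows M (0 : Matrix (Fin 1) (Fin n) ℝ) * vᵀ
      = fromRows (g * M * vᵀ) 0 := by
    rw [h1, fromRows_mul]
    simp [Matrix.mul_assoc]
  have h3 : v * (fromRows M (0 : Matrix (Fin 1) (Fin n) ℝ))ᵀ * (fromBlocks g 0 0 e)ᵀ
      = (fromBlocks g 0 0 e * fromRows M (0 : Matrix (Fin 1) (Fin n) ℝ) * vᵀ)ᵀ := by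
    rw [transpose_mul (fromBlocks g 0 0 e * fromRows M (0 : Matrix (Fin 1) (Fin n) ℝ)) vᵀ,
      transpose_mul (fromBlocks g 0 0 e) (fromRows M (0 : Matrix (Fin 1) (Fin n) ℝ)),
      transpose_transpose, Matrix.mul_assoc]
  rw [h3, h2]
  rfl

end Aux2

section C
variable {n : ℕ}

lemma star_eq_transpose'' {m : Type*} (A : Matrix m m ℝ) : star A = Aᵀ := by
  ext i j
  simp [Matrix.star_apply]

lemma det_sq_one {m : Type*} [Fintype m] [DecidableEq m] {g : Matrix m m ℝ}
    (hg : g ∈ Matrix.orthogonalGroup m ℝ) : g.det * g.det = 1 := by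
  have h := Matrix.mem_unitaryGroup_iff.mp hg
  have h2 := congrArg Matrix.det h
  rwa [det_mul, star_eq_transpose'', det_transpose, det_one] at h2

lemma extSO_mem {g : Matrix (Fin n) (Fin n) ℝ}
    (hg : g ∈ Matrix.orthogonalGroup (Fin n) ℝ) :
    fromBlocks g 0 0 (g.det • (1 : Matrix (Fin 1) (Fin 1) ℝ))
      ∈ Matrix.specialOrthogonalGroup (Fin n ⊕ Fin 1) ℝ := by
  have hdet2 : g.det * g.det = 1 := det_sq_one hg
  have hsq : (g.det • (1 : Matrix (Fin 1) (Fin 1) ℝ)) * (g.det • 1) = 1 := by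
    rw [Matrix.smul_mul, Matrix.mul_smul, smul_smul, hdet2, one_smul, Matrix.one_mul]
  refine Matrix.mem_specialUnitaryGroup_iff.mpr ⟨?_, ?_⟩
  · rw [Matrix.mem_unitaryGroup_iff, star_eq_transpose'', fromBlocks_transpose,
      transpose_zero, transpose_zero, transpose_smul, transpose_one, fromBlocks_multiply]
    simp only [Matrix.mul_zero, Matrix.zero_mul, add_zero, zero_add]
    have hggT : g * gᵀ = 1 := by
      have := Matrix.mem_unitaryGroup_iff.mp hg
      rwa [star_eq_transpose''] at this
    rw [hggT, hsq, fromBlocks_one]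
  · rw [det_fromBlocks_zero₂₁, det_fin_one]
    simp [hdet2]

end C

section D
variable {n : ℕ}

lemma refl_symm (z : Fin n → ℝ) :
    (1 - (2 / (z ⬝ᵥ z)) • vecMulVec z z)ᵀ = 1 - (2 / (z ⬝ᵥ z)) • vecMulVec z z := by
  rw [transpose_sub, transpose_one, transpose_smul, vecMulVec_transpose']

lemma factor_reflection (hn : 1 ≤ n) (M : Matrix (Fin n) (Fin n) ℝ) :
    ∃ w a : Matrix (Fin n) (Fin n) ℝ,
      w ∈ Matrix.orthogonalGroup (Fin n) ℝ ∧ a ∈ Matrix.orthogonalGroup (Fin n) ℝ ∧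
        w.det = -1 ∧ w * w = 1 ∧ wᵀ = w ∧ a * M = M * w := by
  have hM : (Mᵀ * M).IsHermitian := by
    have := Matrix.isHermitian_conjTranspose_mul_self M
    rwa [show Mᴴ = Mᵀ by ext i j; simp] at this
  set i : Fin n := ⟨0, hn⟩
  set x : Fin n → ℝ := ⇑(hM.eigenvectorBasis i) with hxdef
  have heig : (Mᵀ * M) *ᵥ x = hM.eigenvalues i • x := hM.mulVec_eigenvectorBasis i
  have hxn : x ⬝ᵥ x = 1 := by
    have h1 : ‖hM.eigenvectorBasis i‖ = 1 := hM.eigenvectorBasis.orthonormal.1 i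
    have h2 : (inner ℝ (hM.eigenvectorBasis i) (hM.eigenvectorBasis i) : ℝ) = 1 := by
      rw [real_inner_self_eq_norm_mul_norm, h1]; norm_num
    simpa only [PiLp.inner_apply, dotProduct, RCLike.inner_apply, conj_trivial] using h2
  set w : Matrix (Fin n) (Fin n) ℝ := 1 - (2 / (x ⬝ᵥ x)) • vecMulVec x x with hwdef
  set z : Fin n → ℝ := M *ᵥ x with hzdef
  set a : Matrix (Fin n) (Fin n) ℝ := 1 - (2 / (z ⬝ᵥ z)) • vecMulVec z z with hadef
  have hwO : w ∈ Matrix.orthogonalGroup (Fin n) ℝ := refl_mem x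
  have haO : a ∈ Matrix.orthogonalGroup (Fin n) ℝ := refl_mem z
  have hww : w * w = 1 := by
    have := Matrix.mem_unitaryGroup_iff.mp hwO
    rwa [star_eq_transpose', refl_symm] at this
  -- z ᵥ* M = eigenvalue • x
  have hzM : z ᵥ* M = hM.eigenvalues i • x := by
    rw [← mulVec_transpose, hzdef, mulVec_mulVec, heig]
  have hzz : z ⬝ᵥ z = hM.eigenvalues i := by
    nth_rewrite 2 [hzdef]
    rw [dotProduct_mulVec, hzM, smul_dotProduct, hxn, smul_eq_mul, mul_one]
  refine ⟨w, a, hwO, haO, refl_det x hxn, hww, refl_symm x, ?_⟩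
  -- a * M = M * w
  have key1 : vecMulVec z z * M = vecMulVec z (z ᵥ* M) := by
    ext i' j
    simp [Matrix.mul_apply, vecMulVec_apply, Matrix.vecMul, dotProduct, Finset.mul_sum, mul_assoc]
  have key2 : M * vecMulVec x x = vecMulVec z x := by
    ext i' j
    simp [Matrix.mul_apply, vecMulVec_apply, hzdef, Matrix.mulVec, dotProduct,
      Finset.sum_mul, mul_assoc]
  have key3 : vecMulVec z (hM.eigenvalues i • x) = hM.eigenvalues i • vecMulVec z x := by
    ext i' j
    simp [vecMulVec_apply]
    ring
  have hLHS : a * M = M - ((2 / (z ⬝ᵥ z)) * (z ⬝ᵥ z)) • vecMulVec z x := by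
    rw [hadef, Matrix.sub_mul, Matrix.one_mul, Matrix.smul_mul, key1, hzM, key3, hzz,
      smul_smul]
  have hRHS : M * w = M - (2:ℝ) • vecMulVec z x := by
    rw [hwdef, Matrix.mul_sub, Matrix.mul_one, hxn, Matrix.mul_smul, key2]
    norm_num
  rw [hLHS, hRHS]
  rcases eq_or_ne (z ⬝ᵥ z) 0 with h0 | h0
  · have hz0 : z = 0 := dotProduct_self_eq_zero.mp h0
    have : vecMulVec z x = 0 := by ext i' j; simp [hz0, vecMulVec_apply]
    rw [this]
    simp
  · rw [div_mul_cancel₀ _ h0]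

end D

/-- the Fan orbitope `C_M = convexHull {g M hᵀ : g, h ∈ O(n)}`, viewed inside
`Mat_{2n+1}(ℝ)` via the embedding `B ↦ B₀`, equals the intersection of the polar orbitope
`O_{M₀} = convexHull {k M₀ kᵀ : k ∈ K}` with the image of the embedding, where
`K = {diag(u, v) : u ∈ SO(n+1), v ∈ SO(n)}` acts by conjugation. -/
theorem image_fan_orbitope_eq_polar_orbitope_inter
    {n : ℕ} (hn : 1 ≤ n) (M : Matrix (Fin n) (Fin n) ℝ) :
    matEmb '' (convexHull ℝ {m : Matrix (Fin n) (Fin n) ℝ |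
        ∃ g ∈ Matrix.orthogonalGroup (Fin n) ℝ,
          ∃ h ∈ Matrix.orthogonalGroup (Fin n) ℝ, m = g * M * hᵀ}) =
      convexHull ℝ {m : Matrix ((Fin n ⊕ Fin 1) ⊕ Fin n) ((Fin n ⊕ Fin 1) ⊕ Fin n) ℝ |
          ∃ u ∈ Matrix.specialOrthogonalGroup (Fin n ⊕ Fin 1) ℝ,
            ∃ v ∈ Matrix.specialOrthogonalGroup (Fin n) ℝ,
              m = Matrix.fromBlocks u 0 0 v * matEmb M * (Matrix.fromBlocks u 0 0 v)ᵀ}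
        ∩ Set.range matEmb := by
  classical
  set S := {m : Matrix (Fin n) (Fin n) ℝ |
      ∃ g ∈ Matrix.orthogonalGroup (Fin n) ℝ,
        ∃ h ∈ Matrix.orthogonalGroup (Fin n) ℝ, m = g * M * hᵀ} with hSdef
  set T := {m : Matrix ((Fin n ⊕ Fin 1) ⊕ Fin n) ((Fin n ⊕ Fin 1) ⊕ Fin n) ℝ |
      ∃ u ∈ Matrix.specialOrthogonalGroup (Fin n ⊕ Fin 1) ℝ,
        ∃ v ∈ Matrix.specialOrthogonalGroup (Fin n) ℝ,
          m = Matrix.fromBlocks u 0 0 v * matEmb M * (Matrix.fromBlocks u 0 0 v)ᵀ} with hTdef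
  have hcoe : ∀ B, matEmb B = matEmbL n B := fun _ => rfl
  -- forward : matEmb '' S ⊆ T
  have hST : matEmb '' S ⊆ T := by
    rintro _ ⟨m, ⟨g, hg, h, hh, rfl⟩, rfl⟩
    have hdet2 : h.det * h.det = 1 := det_sq_one hh
    rcases mul_self_eq_one_iff.mp hdet2 with hd1 | hdm1
    · refine ⟨fromBlocks g 0 0 (g.det • 1), extSO_mem hg, h,
        Matrix.mem_specialUnitaryGroup_iff.mpr ⟨hh, hd1⟩, ?_⟩
      rw [conj_matEmb_blockdiag]
    · obtain ⟨w, a, hwO, haO, hwdet, hww, hwT, haM⟩ := factor_reflection hn M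
      set v := h * w with hvdef
      have hvO : v ∈ Matrix.orthogonalGroup (Fin n) ℝ := mul_mem hh hwO
      have hvdet : v.det = 1 := by rw [hvdef, det_mul, hdm1, hwdet]; norm_num
      have heq : (g * a) * M * vᵀ = g * M * hᵀ := by
        rw [hvdef, transpose_mul, hwT, Matrix.mul_assoc g a M, haM,
          Matrix.mul_assoc g (M * w) (w * hᵀ), Matrix.mul_assoc M w (w * hᵀ),
          ← Matrix.mul_assoc w w hᵀ, hww, Matrix.one_mul, ← Matrix.mul_assoc]
      refine ⟨fromBlocks (g * a) 0 0 ((g * a).det • 1), extSO_mem (mul_mem hg haO), v,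
        Matrix.mem_specialUnitaryGroup_iff.mpr ⟨hvO, hvdet⟩, ?_⟩
      rw [conj_matEmb_blockdiag, heq]
  apply Set.Subset.antisymm
  · rintro _ ⟨B, hB, rfl⟩
    refine ⟨?_, ⟨B, rfl⟩⟩
    rw [hcoe]
    have himg : matEmbL n '' (convexHull ℝ S) = convexHull ℝ (matEmbL n '' S) :=
      (matEmbL n).image_convexHull S
    have hmem : matEmbL n B ∈ convexHull ℝ (matEmbL n '' S) := by
      rw [← himg]; exact Set.mem_image_of_mem _ hB
    refine convexHull_mono ?_ hmem
    intro y hy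
    exact hST hy
  · rintro y ⟨hyT, B, rfl⟩
    refine ⟨B, ?_, rfl⟩
    have h1 : projL n (matEmb B) ∈ projL n '' (convexHull ℝ T) := Set.mem_image_of_mem _ hyT
    rw [(projL n).image_convexHull, projL_matEmb] at h1
    have h2 : projL n '' T ⊆ convexHull ℝ S := by
      rintro _ ⟨m, ⟨u, huSO, v, hvSO, rfl⟩, rfl⟩
      rw [projL_conj]
      have hcorner := corner_mem_convexHull u (Matrix.mem_specialUnitaryGroup_iff.mp huSO).1
      have himg2 := (LinearMap.mulRight ℝ (M * vᵀ)).image_convexHull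
        {g : Matrix (Fin n) (Fin n) ℝ | g ∈ Matrix.orthogonalGroup (Fin n) ℝ}
      have hmem : u.toBlocks₁₁ * (M * vᵀ)
          ∈ convexHull ℝ ((LinearMap.mulRight ℝ (M * vᵀ)) ''
            {g : Matrix (Fin n) (Fin n) ℝ | g ∈ Matrix.orthogonalGroup (Fin n) ℝ}) := by
        rw [← himg2]
        exact Set.mem_image_of_mem _ hcorner
      rw [← Matrix.mul_assoc] at hmem
      refine convexHull_mono ?_ hmem
      rintro _ ⟨g, hg, rfl⟩
      exact ⟨g, hg, v, (Matrix.mem_specialUnitaryGroup_iff.mp hvSO).1, by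
        rw [LinearMap.mulRight_apply, Matrix.mul_assoc]⟩
    exact convexHull_min h2 (convex_convexHull ℝ S) h1
end Aux
end

section
/- Let X be a real diagonal n×n matrix. Then convexHull{g X gᵀ : g ∈ O(n)} ∩ {diagonal matrices} = convexHull{σ·X : σ ∈ S_n}; that is, the intersection of the symmetric Schur–Horn orbitope of X with the subspace of diagonal matrices equals the convex hull of the matrices obtained from X by permuting its diagonal entries. -/
open Matrix

section Aux

variable {n : ℕ}

/-- extracting the diagonal as a matrix is linear -/
lemma diagPart_isLinear :
    IsLinearMap ℝ (fun m : Matrix (Fin n) (Fin n) ℝ => Matrix.diagonal (fun i => m i i)) := by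
  constructor
  · intro a b; ext i j
    by_cases h : i = j <;> simp [Matrix.diagonal_apply, h]
  · intro c a; ext i j
    by_cases h : i = j <;> simp [Matrix.diagonal_apply, h]

lemma diagMulVec_isLinear (d : Fin n → ℝ) :
    IsLinearMap ℝ (fun S : Matrix (Fin n) (Fin n) ℝ => Matrix.diagonal (S *ᵥ d)) := by
  constructor
  · intro a b
    rw [add_mulVec, Matrix.diagonal_add]
    rfl
  · intro c a; rw [smul_mulVec, Matrix.diagonal_smul]

lemma permMatrix_mulVec (σ : Equiv.Perm (Fin n)) (d : Fin n → ℝ) :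
    σ.permMatrix ℝ *ᵥ d = fun i => d (σ i) := by
  funext i
  simp [Matrix.mulVec, dotProduct, PEquiv.toMatrix_apply, Equiv.toPEquiv_apply,
    Finset.sum_ite_eq]

lemma permMatrix_mem_orthogonal (σ : Equiv.Perm (Fin n)) :
    σ.permMatrix ℝ ∈ Matrix.orthogonalGroup (Fin n) ℝ := by
  rw [Matrix.mem_orthogonalGroup_iff]
  have hstar : star (σ.permMatrix ℝ) = (σ.permMatrix ℝ)ᵀ := rfl
  rw [← PEquiv.toMatrix_symm, ← Equiv.toPEquiv_symm, ← PEquiv.toMatrix_trans,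
    ← Equiv.toPEquiv_trans]
  simp

lemma permMatrix_transpose (σ : Equiv.Perm (Fin n)) :
    (σ.permMatrix ℝ)ᵀ = (σ⁻¹).permMatrix ℝ := by
  rw [← PEquiv.toMatrix_symm, ← Equiv.toPEquiv_symm]; rfl

lemma permMatrix_conj_diagonal (σ : Equiv.Perm (Fin n)) (d : Fin n → ℝ) :
    σ.permMatrix ℝ * Matrix.diagonal d * (σ.permMatrix ℝ)ᵀ =
      Matrix.diagonal (fun i => d (σ i)) := by
  rw [permMatrix_transpose, PEquiv.toMatrix_toPEquiv_mul, PEquiv.mul_toMatrix_toPEquiv]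
  ext i j
  by_cases h : i = j
  · subst h; simp [Matrix.diagonal_apply, Equiv.Perm.inv_def]
  · have h2 : σ i ≠ σ j := fun hc => h (σ.injective hc)
    simp [Matrix.diagonal_apply, h, h2, Equiv.Perm.inv_def]

end Aux

/-- for a real diagonal matrix `X = diagonal d`, the intersection of the symmetric
Schur–Horn orbitope `convexHull {g X gᵀ : g ∈ O(n)}` with the set of diagonal matrices equals
the convex hull of the matrices obtained from `X` by permuting its diagonal entries. -/
theorem schurHorn_orbitope_inter_diagonal
    {n : ℕ} (d : Fin n → ℝ) :
    convexHull ℝ {m : Matrix (Fin n) (Fin n) ℝ |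
        ∃ g ∈ Matrix.orthogonalGroup (Fin n) ℝ, m = g * Matrix.diagonal d * gᵀ}
      ∩ Set.range (Matrix.diagonal : (Fin n → ℝ) → Matrix (Fin n) (Fin n) ℝ) =
    convexHull ℝ {m : Matrix (Fin n) (Fin n) ℝ |
        ∃ σ : Equiv.Perm (Fin n), m = Matrix.diagonal (fun i => d (σ⁻¹ i))} := by
  set orbit : Set (Matrix (Fin n) (Fin n) ℝ) :=
    {m | ∃ g ∈ Matrix.orthogonalGroup (Fin n) ℝ, m = g * Matrix.diagonal d * gᵀ}
  set permSet : Set (Matrix (Fin n) (Fin n) ℝ) :=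
    {m | ∃ σ : Equiv.Perm (Fin n), m = Matrix.diagonal (fun i => d (σ⁻¹ i))}
  set Φ : Matrix (Fin n) (Fin n) ℝ → Matrix (Fin n) (Fin n) ℝ :=
    fun m => Matrix.diagonal (fun i => m i i) with hΦ
  set L : Matrix (Fin n) (Fin n) ℝ → Matrix (Fin n) (Fin n) ℝ :=
    fun S => Matrix.diagonal (S *ᵥ d) with hL
  -- T : images of doubly stochastic matrices
  set T : Set (Matrix (Fin n) (Fin n) ℝ) :=
    L '' (doublyStochastic ℝ (Fin n) : Set (Matrix (Fin n) (Fin n) ℝ)) with hT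
  have hTconv : Convex ℝ T := convex_doublyStochastic.is_linear_image (diagMulVec_isLinear d)
  -- T ⊆ convexHull permSet
  have hTsub : T ⊆ convexHull ℝ permSet := by
    rintro _ ⟨S, hS, rfl⟩
    have hS' : S ∈ convexHull ℝ {σ.permMatrix ℝ | σ : Equiv.Perm (Fin n)} := by
      rw [← doublyStochastic_eq_convexHull_permMatrix]; exact hS
    have : L S ∈ L '' convexHull ℝ {σ.permMatrix ℝ | σ : Equiv.Perm (Fin n)} :=
      Set.mem_image_of_mem _ hS'
    rw [(diagMulVec_isLinear d).image_convexHull] at this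
    refine convexHull_mono ?_ this
    rintro _ ⟨_, ⟨σ, rfl⟩, rfl⟩
    refine ⟨σ⁻¹, ?_⟩
    simp [hL, permMatrix_mulVec σ d]
  -- Φ of the orbit lands in T
  have hΦorbit : ∀ m ∈ orbit, Φ m ∈ T := by
    rintro _ ⟨g, hg, rfl⟩
    set S : Matrix (Fin n) (Fin n) ℝ := fun i j => g i j ^ 2 with hSdef
    have hgg : g * gᵀ = 1 := by
      have h1 := hg
      rw [Matrix.mem_orthogonalGroup_iff] at h1
      simpa using h1
    have hgg' : gᵀ * g = 1 := by
      have h1 := hg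
      rw [Matrix.mem_orthogonalGroup_iff'] at h1
      simpa using h1
    have hSmem : S ∈ doublyStochastic ℝ (Fin n) := by
      rw [mem_doublyStochastic_iff_sum]
      refine ⟨fun i j => sq_nonneg _, fun i => ?_, fun j => ?_⟩
      · have := congrFun (congrFun hgg i) i
        simp only [Matrix.mul_apply, Matrix.transpose_apply, Matrix.one_apply_eq] at this
        calc ∑ j, S i j = ∑ j, g i j * g i j := by simp [hSdef, sq]
        _ = 1 := this
      · have := congrFun (congrFun hgg' j) j
        simp only [Matrix.mul_apply, Matrix.transpose_apply, Matrix.one_apply_eq] at this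
        calc ∑ i, S i j = ∑ i, g i j * g i j := by simp [hSdef, sq]
        _ = 1 := this
    refine ⟨S, hSmem, ?_⟩
    have key : ∀ i, (S *ᵥ d) i = (g * Matrix.diagonal d * gᵀ) i i := by
      intro i
      rw [Matrix.mul_apply]
      simp only [Matrix.mul_diagonal, Matrix.transpose_apply, Matrix.mulVec, dotProduct]
      refine Finset.sum_congr rfl fun j _ => ?_
      simp only [hSdef, sq]; ring
    rw [hL, hΦ]
    exact congrArg Matrix.diagonal (funext key)
  apply Set.Subset.antisymm
  · rintro m ⟨hm, a, rfl⟩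
    have h1 : Φ (Matrix.diagonal a) ∈ Φ '' (convexHull ℝ orbit) :=
      Set.mem_image_of_mem _ hm
    rw [diagPart_isLinear.image_convexHull] at h1
    have hsub : Φ '' orbit ⊆ T := by
      rintro _ ⟨y, hy, rfl⟩
      exact hΦorbit y hy
    have h2 : Φ (Matrix.diagonal a) ∈ convexHull ℝ T := convexHull_mono hsub h1
    rw [hTconv.convexHull_eq] at h2
    have h3 : Φ (Matrix.diagonal a) = Matrix.diagonal a := by
      rw [hΦ]
      ext i j
      by_cases h : i = j <;> simp [Matrix.diagonal_apply, h]
    rw [h3] at h2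
    exact hTsub h2
  · apply convexHull_min
    · rintro _ ⟨σ, rfl⟩
      refine Set.mem_inter ?_ (Set.mem_range_self _)
      apply subset_convexHull
      refine ⟨(σ⁻¹).permMatrix ℝ, permMatrix_mem_orthogonal _, ?_⟩
      rw [permMatrix_conj_diagonal]
    · refine (convex_convexHull ℝ orbit).inter ?_
      rintro x ⟨a, rfl⟩ y ⟨b, rfl⟩ s t hs ht hst
      refine ⟨s • a + t • b, ?_⟩
      ext i j
      by_cases h : i = j <;> simp [Matrix.diagonal_apply, h]
end

section
/- Let X be a real diagonal n×n matrix, O_X := convexHull{g X gᵀ : g ∈ O(n)}, Π_X := convexHull{σ·X : σ ∈ S_n}, and P the linear map on n×n real matrices that sets all off-diagonal entries to zero. Let F be a face of O_X and k ∈ O(n) such that f := P({k Y kᵀ : Y ∈ F}) is a face of Π_X. Then {k Y kᵀ : Y ∈ F} = P⁻¹(f) ∩ O_X and f = {k Y kᵀ : Y ∈ F} ∩ {diagonal matrices}. -/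
open Matrix

/-- The linear operation on `n × n` real matrices that sets all off-diagonal entries to zero
(orthogonal projection onto the subspace of diagonal matrices). -/
def diagPart {n : ℕ} (A : Matrix (Fin n) (Fin n) ℝ) : Matrix (Fin n) (Fin n) ℝ :=
  Matrix.diagonal (fun i => A i i)

section Aux

variable {n : ℕ}

local notation "M" => Matrix (Fin n) (Fin n) ℝ

lemma isLinearMap_conj (u : M) : IsLinearMap ℝ (fun W : M => u * W * uᵀ) := by
  constructor
  · intro A B; simp [Matrix.mul_add, Matrix.add_mul]
  · intro c A; simp [Matrix.mul_smul, Matrix.smul_mul]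

lemma orth_transpose_mul {u : M} (hu : u ∈ Matrix.orthogonalGroup (Fin n) ℝ) :
    uᵀ * u = 1 := by
  have := (Unitary.mem_iff.mp hu).1
  rwa [Matrix.star_eq_conjTranspose, Matrix.conjTranspose_eq_transpose_of_trivial] at this

lemma orth_mul_transpose {u : M} (hu : u ∈ Matrix.orthogonalGroup (Fin n) ℝ) :
    u * uᵀ = 1 := by
  have := (Unitary.mem_iff.mp hu).2
  rwa [Matrix.star_eq_conjTranspose, Matrix.conjTranspose_eq_transpose_of_trivial] at this

lemma conj_mem_hull (d : Fin n → ℝ) {u W : M} (hu : u ∈ Matrix.orthogonalGroup (Fin n) ℝ)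
    (hW : W ∈ convexHull ℝ {m : M | ∃ g ∈ Matrix.orthogonalGroup (Fin n) ℝ,
      m = g * Matrix.diagonal d * gᵀ}) :
    u * W * uᵀ ∈ convexHull ℝ {m : M | ∃ g ∈ Matrix.orthogonalGroup (Fin n) ℝ,
      m = g * Matrix.diagonal d * gᵀ} := by
  set S : Set M := {m : M | ∃ g ∈ Matrix.orthogonalGroup (Fin n) ℝ,
      m = g * Matrix.diagonal d * gᵀ} with hS
  have hsub : convexHull ℝ S ⊆ {W : M | u * W * uᵀ ∈ convexHull ℝ S} := by
    apply convexHull_min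
    · rintro m ⟨g, hg, rfl⟩
      apply subset_convexHull
      refine ⟨u * g, mul_mem hu hg, ?_⟩
      simp [Matrix.transpose_mul, Matrix.mul_assoc]
    · exact (convex_convexHull ℝ S).is_linear_preimage (isLinearMap_conj u)
  exact hsub hW

lemma frob_bound (d : Fin n → ℝ) {Z : M}
    (hZ : Z ∈ convexHull ℝ {m : M | ∃ g ∈ Matrix.orthogonalGroup (Fin n) ℝ,
      m = g * Matrix.diagonal d * gᵀ}) :
    ∑ a, ∑ b, Z a b ^ 2 ≤ ∑ i, d i ^ 2 := by
  set N : M → ℝ := fun Z => ∑ a, ∑ b, Z a b ^ 2 with hN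
  have hconv : ConvexOn ℝ Set.univ N := by
    refine ⟨convex_univ, fun x _ y _ a b ha hb hab => ?_⟩
    simp only [hN, smul_eq_mul]
    calc ∑ i, ∑ j, ((a • x + b • y) i j) ^ 2
        = ∑ i, ∑ j, (a • (x i j) + b • (y i j)) ^ 2 := by
          simp [Matrix.add_apply, Matrix.smul_apply, smul_eq_mul]
      _ ≤ ∑ i, ∑ j, (a • (x i j) ^ 2 + b • (y i j) ^ 2) := by
          refine Finset.sum_le_sum fun i _ => Finset.sum_le_sum fun j _ => ?_
          exact (Even.convexOn_pow (by norm_num : Even 2)).2 (Set.mem_univ (x i j))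
            (Set.mem_univ (y i j)) ha hb hab
      _ = a * (∑ i, ∑ j, x i j ^ 2) + b * (∑ i, ∑ j, y i j ^ 2) := by
          simp [Finset.sum_add_distrib, Finset.mul_sum, smul_eq_mul]
  have hC : Convex ℝ {W : M | N W ≤ ∑ i, d i ^ 2} := by
    have := hconv.convex_le (∑ i, d i ^ 2)
    simpa using this
  have hsub : convexHull ℝ {m : M | ∃ g ∈ Matrix.orthogonalGroup (Fin n) ℝ,
      m = g * Matrix.diagonal d * gᵀ} ⊆ {W : M | N W ≤ ∑ i, d i ^ 2} := by
    apply convexHull_min _ hC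
    rintro m ⟨g, hg, rfl⟩
    have htr : ∀ A : M, N A = Matrix.trace (A * Aᵀ) := by
      intro A
      simp [hN, Matrix.trace, Matrix.mul_apply, Matrix.diag, sq]
    have : (g * Matrix.diagonal d * gᵀ) * (g * Matrix.diagonal d * gᵀ)ᵀ
        = g * (Matrix.diagonal d * (Matrix.diagonal d)ᵀ) * gᵀ := by
      simp only [Matrix.transpose_mul, Matrix.transpose_transpose, Matrix.mul_assoc]
      rw [← Matrix.mul_assoc gᵀ g, orth_transpose_mul hg, one_mul]
    show N _ ≤ _
    rw [htr, this, Matrix.trace_mul_comm, ← Matrix.mul_assoc, orth_transpose_mul hg, one_mul,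
      Matrix.diagonal_transpose, Matrix.diagonal_mul_diagonal, Matrix.trace_diagonal]
    simp [sq]
  exact hsub hZ

lemma rigid (d : Fin n → ℝ) {Z : M}
    (hZ : Z ∈ convexHull ℝ {m : M | ∃ g ∈ Matrix.orthogonalGroup (Fin n) ℝ,
      m = g * Matrix.diagonal d * gᵀ})
    (e : Fin n → ℝ) (hperm : ∑ i, e i ^ 2 = ∑ i, d i ^ 2)
    (hdiag : ∀ a, Z a a = e a) : Z = Matrix.diagonal e := by
  have hb := frob_bound d hZ
  have hsplit : ∀ a : Fin n, ∑ b, Z a b ^ 2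
      = Z a a ^ 2 + ∑ b ∈ Finset.univ.erase a, Z a b ^ 2 :=
    fun a => (Finset.add_sum_erase _ _ (Finset.mem_univ a)).symm
  have hdiagsum : ∑ a, Z a a ^ 2 = ∑ i, d i ^ 2 := by
    rw [← hperm]; exact Finset.sum_congr rfl fun a _ => by rw [hdiag a]
  have hoff : ∑ a, ∑ b ∈ Finset.univ.erase a, Z a b ^ 2 ≤ 0 := by
    have : ∑ a, ∑ b, Z a b ^ 2 = ∑ a, Z a a ^ 2 + ∑ a, ∑ b ∈ Finset.univ.erase a, Z a b ^ 2 := by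
      rw [← Finset.sum_add_distrib]; exact Finset.sum_congr rfl fun a _ => hsplit a
    linarith [hb, this, hdiagsum]
  have hzero : ∀ a ∈ Finset.univ, ∀ b ∈ Finset.univ.erase a, Z a b ^ 2 = 0 := by
    have h1 : ∑ a, ∑ b ∈ Finset.univ.erase a, Z a b ^ 2 = 0 := le_antisymm hoff
      (Finset.sum_nonneg fun a _ => Finset.sum_nonneg fun b _ => sq_nonneg _)
    intro a ha b hb
    have h2 := (Finset.sum_eq_zero_iff_of_nonneg
      (fun a _ => Finset.sum_nonneg fun b _ => sq_nonneg (Z a b))).mp h1 a ha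
    exact (Finset.sum_eq_zero_iff_of_nonneg (fun b _ => sq_nonneg (Z a b))).mp h2 b hb
  ext a b
  by_cases hab : a = b
  · subst hab; simp [Matrix.diagonal_apply_eq, hdiag a]
  · have : Z a b ^ 2 = 0 := hzero a (Finset.mem_univ a) b
      (Finset.mem_erase.mpr ⟨fun h => hab h.symm, Finset.mem_univ b⟩)
    rw [Matrix.diagonal_apply_ne _ hab]
    exact pow_eq_zero_iff (by norm_num) |>.mp this

lemma extreme_absorb {C f : Set M} (hC : Convex ℝ C) (hf : IsExtreme ℝ C f)
    {ι : Type} (t : Finset ι) (w : ι → ℝ) (z : ι → M)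
    (h0 : ∀ i ∈ t, 0 ≤ w i) (h1 : ∑ i ∈ t, w i = 1) (hz : ∀ i ∈ t, z i ∈ C)
    (hx : (∑ i ∈ t, w i • z i) ∈ f) :
    ∀ i ∈ t, w i ≠ 0 → z i ∈ f := by
  classical
  induction t using Finset.induction_on generalizing w with
  | empty => simp at h1
  | @insert a s has ih =>
    rw [Finset.sum_insert has] at h1 hx
    set W := ∑ i ∈ s, w i with hW
    by_cases hW0 : W = 0
    · -- all weights on s vanish, w a = 1
      have hwz : ∀ i ∈ s, w i = 0 := by
        rw [hW] at hW0
        exact fun i hi => (Finset.sum_eq_zero_iff_of_nonneg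
          (fun j hj => h0 j (Finset.mem_insert_of_mem hj))).mp hW0 i hi
      have hwa : w a = 1 := by rw [hW0] at h1; linarith
      have hxa : z a ∈ f := by
        have : ∑ i ∈ s, w i • z i = 0 := Finset.sum_eq_zero fun i hi => by
          rw [hwz i hi, zero_smul]
        rw [this, add_zero, hwa, one_smul] at hx
        exact hx
      intro i hi hwi
      rcases Finset.mem_insert.mp hi with rfl | hi'
      · exact hxa
      · exact absurd (hwz i hi') hwi
    · have hWpos : 0 < W := lt_of_le_of_ne
        (Finset.sum_nonneg fun i hi => h0 i (Finset.mem_insert_of_mem hi)) (Ne.symm hW0)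
      by_cases hwa0 : w a = 0
      · have hW1 : W = 1 := by linarith
        have hx' : (∑ i ∈ s, w i • z i) ∈ f := by
          rwa [hwa0, zero_smul, zero_add] at hx
        intro i hi hwi
        rcases Finset.mem_insert.mp hi with rfl | hi'
        · exact absurd hwa0 hwi
        · exact ih w (fun j hj => h0 j (Finset.mem_insert_of_mem hj)) (by rw [← hW]; exact hW1)
            (fun j hj => hz j (Finset.mem_insert_of_mem hj)) hx' i hi' hwi
      · have hwapos : 0 < w a := lt_of_le_of_ne (h0 a (Finset.mem_insert_self a s))
          (Ne.symm hwa0)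
        set y : M := W⁻¹ • ∑ i ∈ s, w i • z i with hy
        have hyC : y ∈ C := by
          have := hC.centerMass_mem (t := s) (w := w) (z := z)
            (fun i hi => h0 i (Finset.mem_insert_of_mem hi)) (by rw [← hW] at *; exact hWpos)
            (fun i hi => hz i (Finset.mem_insert_of_mem hi))
          rwa [Finset.centerMass, ← hW] at this
        have hsum : ∑ i ∈ s, w i • z i = W • y := by
          rw [hy, smul_inv_smul₀ hW0]
        have hseg : (w a • z a + ∑ i ∈ s, w i • z i) ∈ openSegment ℝ (z a) y := by
          rw [hsum]
          exact ⟨w a, W, hwapos, hWpos, h1, rfl⟩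
        have hzaf := hf.2 (hz a (Finset.mem_insert_self a s)) hyC hx hseg
        have hyf := hf.right_mem_of_mem_openSegment (hz a (Finset.mem_insert_self a s)) hyC hx hseg
        have hrec : ∀ i ∈ s, w i / W ≠ 0 → z i ∈ f := by
          apply ih (fun i => w i / W)
          · exact fun i hi => div_nonneg (h0 i (Finset.mem_insert_of_mem hi)) hWpos.le
          · rw [← Finset.sum_div, ← hW, div_self hW0]
          · exact fun i hi => hz i (Finset.mem_insert_of_mem hi)
          · have : ∑ i ∈ s, (w i / W) • z i = y := by
              rw [hy, Finset.smul_sum]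
              exact Finset.sum_congr rfl fun i _ => by
                rw [div_eq_inv_mul, mul_smul]
            rw [this]; exact hyf
        intro i hi hwi
        rcases Finset.mem_insert.mp hi with rfl | hi'
        · exact hzaf
        · exact hrec i hi' (div_ne_zero hwi hW0)

def zeroOut (s : Finset (Fin n)) (Y : M) : M :=
  Matrix.of fun a b => if a = b ∨ (a ∉ s ∧ b ∉ s) then Y a b else 0

lemma zeroOut_empty (Y : M) : zeroOut ∅ Y = Y := by
  ext a b; simp [zeroOut]

lemma zeroOut_univ (Y : M) : zeroOut Finset.univ Y = diagPart Y := by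
  ext a b
  by_cases hab : a = b
  · subst hab; simp [zeroOut, diagPart]
  · simp [zeroOut, diagPart, hab, Matrix.diagonal_apply_ne _ hab]

lemma zeroOut_step {s : Finset (Fin n)} {i : Fin n} (his : i ∉ s) (Y : M) :
    zeroOut (insert i s) Y = (1/2 : ℝ) • zeroOut s Y +
      (1/2 : ℝ) • (Matrix.diagonal (fun j => if j = i then (-1 : ℝ) else 1) * zeroOut s Y *
        Matrix.diagonal (fun j => if j = i then (-1 : ℝ) else 1)) := by
  ext a b
  simp only [Matrix.add_apply, Matrix.smul_apply, Matrix.diagonal_mul, Matrix.mul_diagonal,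
    smul_eq_mul, zeroOut, Matrix.of_apply]
  by_cases hai : a = i <;> by_cases hbi : b = i <;> by_cases hab : a = b <;>
    by_cases has2 : a ∈ s <;> by_cases hbs : b ∈ s <;>
    simp_all [Finset.mem_insert] <;> ring

lemma sign_diag_orth (i : Fin n) :
    Matrix.diagonal (fun j => if j = i then (-1 : ℝ) else 1) ∈
      Matrix.orthogonalGroup (Fin n) ℝ := by
  rw [Matrix.mem_orthogonalGroup_iff]
  rw [Matrix.diagonal_transpose, Matrix.diagonal_mul_diagonal]
  have hv : (fun j => (if j = i then (-1 : ℝ) else 1) * (if j = i then (-1 : ℝ) else 1))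
      = fun _ => (1 : ℝ) := by
    funext j; by_cases hj : j = i <;> simp [hj]
  rw [hv]
  exact Matrix.diagonal_one

end Aux
/-- for `X = diagonal d`, `O_X = convexHull {g X gᵀ : g ∈ O(n)}` and
`Π_X = convexHull {σ·X : σ ∈ S_n}`, if `F` is a face of `O_X` and `k ∈ O(n)` is such that
`f := P({k Y kᵀ : Y ∈ F})` is a face of `Π_X`, then `{k Y kᵀ : Y ∈ F} = P⁻¹(f) ∩ O_X` and
`f = {k Y kᵀ : Y ∈ F} ∩ {diagonal matrices}`. -/
theorem conj_face_eq_preimage_inter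
    {n : ℕ} (d : Fin n → ℝ)
    (F : Set (Matrix (Fin n) (Fin n) ℝ)) (hFconv : Convex ℝ F)
    (hF : IsExtreme ℝ (convexHull ℝ {m : Matrix (Fin n) (Fin n) ℝ |
        ∃ g ∈ Matrix.orthogonalGroup (Fin n) ℝ, m = g * Matrix.diagonal d * gᵀ}) F)
    (k : Matrix (Fin n) (Fin n) ℝ) (hk : k ∈ Matrix.orthogonalGroup (Fin n) ℝ)
    (hfconv : Convex ℝ (diagPart '' ((fun Y => k * Y * kᵀ) '' F)))
    (hf : IsExtreme ℝ (convexHull ℝ {m : Matrix (Fin n) (Fin n) ℝ |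
        ∃ σ : Equiv.Perm (Fin n), m = Matrix.diagonal (fun i => d (σ⁻¹ i))})
      (diagPart '' ((fun Y => k * Y * kᵀ) '' F))) :
    (fun Y => k * Y * kᵀ) '' F =
        diagPart ⁻¹' (diagPart '' ((fun Y => k * Y * kᵀ) '' F)) ∩
          convexHull ℝ {m : Matrix (Fin n) (Fin n) ℝ |
            ∃ g ∈ Matrix.orthogonalGroup (Fin n) ℝ, m = g * Matrix.diagonal d * gᵀ} ∧
      diagPart '' ((fun Y => k * Y * kᵀ) '' F) =
        ((fun Y => k * Y * kᵀ) '' F) ∩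
          Set.range (Matrix.diagonal : (Fin n → ℝ) → Matrix (Fin n) (Fin n) ℝ) := by
  classical
  set O := convexHull ℝ {m : Matrix (Fin n) (Fin n) ℝ |
      ∃ g ∈ Matrix.orthogonalGroup (Fin n) ℝ, m = g * Matrix.diagonal d * gᵀ} with hO
  set Pi := convexHull ℝ {m : Matrix (Fin n) (Fin n) ℝ |
      ∃ σ : Equiv.Perm (Fin n), m = Matrix.diagonal (fun i => d (σ⁻¹ i))} with hPi
  set K := (fun Y => k * Y * kᵀ) '' F with hK
  set f := diagPart '' K with hfdef
  have hkT : kᵀ ∈ Matrix.orthogonalGroup (Fin n) ℝ := by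
    have := Unitary.star_mem hk
    rwa [Matrix.star_eq_conjTranspose, Matrix.conjTranspose_eq_transpose_of_trivial] at this
  have h1k : kᵀ * k = 1 := orth_transpose_mul hk
  have h2k : k * kᵀ = 1 := orth_mul_transpose hk
  have hKO : K ⊆ O := by
    rintro x ⟨Y, hY, rfl⟩
    exact conj_mem_hull d hk (hF.1 hY)
  have hKconv : Convex ℝ K := hFconv.is_linear_image (isLinearMap_conj k)
  have hinv : ∀ W : Matrix (Fin n) (Fin n) ℝ, kᵀ * (k * W * kᵀ) * k = W := by
    intro W
    rw [show kᵀ * (k * W * kᵀ) * k = (kᵀ * k) * W * (kᵀ * k) from by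
      simp only [Matrix.mul_assoc], h1k, one_mul, Matrix.mul_one]
  have hinv' : ∀ W : Matrix (Fin n) (Fin n) ℝ, k * (kᵀ * W * k) * kᵀ = W := by
    intro W
    rw [show k * (kᵀ * W * k) * kᵀ = (k * kᵀ) * W * (k * kᵀ) from by
      simp only [Matrix.mul_assoc], h2k, one_mul, Matrix.mul_one]
  have hKext : IsExtreme ℝ O K := by
    refine ⟨hKO, ?_⟩
    intro x₁ h₁ x₂ h₂ x hx hseg
    obtain ⟨Y₀, hY₀, rfl⟩ := hx
    obtain ⟨a, b, ha, hb, hab, hsum⟩ := hseg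
    have hseg2 : Y₀ ∈ openSegment ℝ (kᵀ * x₁ * k) (kᵀ * x₂ * k) := by
      refine ⟨a, b, ha, hb, hab, ?_⟩
      have hlin : kᵀ * (a • x₁ + b • x₂) * k
          = a • (kᵀ * x₁ * k) + b • (kᵀ * x₂ * k) := by
        simp [Matrix.mul_add, Matrix.add_mul, Matrix.mul_smul, Matrix.smul_mul]
      rw [← hlin, hsum, hinv]
    have hx1O : kᵀ * x₁ * k ∈ O := by
      have := conj_mem_hull d hkT h₁
      rwa [Matrix.transpose_transpose] at this
    have hx2O : kᵀ * x₂ * k ∈ O := by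
      have := conj_mem_hull d hkT h₂
      rwa [Matrix.transpose_transpose] at this
    have m₁ := hF.2 hx1O hx2O hY₀ hseg2
    exact ⟨kᵀ * x₁ * k, m₁, hinv' x₁⟩
  have hfK : f ⊆ K := by
    intro x hxf
    have hxPi : x ∈ Pi := hf.1 hxf
    rw [hPi, convexHull_eq] at hxPi
    obtain ⟨ι, t, w, z, h0, h1, hzV, hcm⟩ := hxPi
    have hxsum : ∑ i ∈ t, w i • z i = x := by
      rw [← Finset.centerMass_eq_of_sum_1 _ _ h1, hcm]
    have habs := extreme_absorb (convex_convexHull ℝ _) hf t w z h0 h1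
      (fun i hi => subset_convexHull ℝ _ (hzV i hi)) (by rw [hxsum]; exact hxf)
    have hzK : ∀ i ∈ t, w i ≠ 0 → z i ∈ K := by
      intro i hi hwi
      obtain ⟨Z, hZK, hZd⟩ := habs i hi hwi
      obtain ⟨σ, hσ⟩ := hzV i hi
      have hZdiag : ∀ a, Z a a = d (σ⁻¹ a) := by
        intro a
        have := congrArg (fun m => m a a) (hZd.trans hσ)
        simpa [diagPart, Matrix.diagonal_apply_eq] using this
      have hperm : ∑ i, d (σ⁻¹ i) ^ 2 = ∑ i, d i ^ 2 :=
        Equiv.sum_comp σ⁻¹ (fun i => d i ^ 2)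
      have hZeq : Z = Matrix.diagonal (fun a => d (σ⁻¹ a)) :=
        rigid d (hKO hZK) _ hperm hZdiag
      rw [hσ, ← hZeq]
      exact hZK
    set t' := t.filter (fun i => w i ≠ 0) with ht'
    have hsum' : ∑ i ∈ t', w i = 1 := by
      rw [ht', Finset.sum_filter_ne_zero]; exact h1
    have hxt' : ∑ i ∈ t', w i • z i = x := by
      rw [← hxsum, ht']
      apply Finset.sum_filter_of_ne
      intro i hi hne h0'
      exact hne (by rw [h0', zero_smul])
    rw [← hxt']
    exact hKconv.sum_mem (fun i hi => h0 i (Finset.mem_filter.mp hi).1) hsum'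
      (fun i hi => hzK i (Finset.mem_filter.mp hi).1 (Finset.mem_filter.mp hi).2)
  have main : ∀ Y, Y ∈ O → diagPart Y ∈ K → Y ∈ K := by
    intro Y hYO hYK
    have hOz : ∀ s : Finset (Fin n), zeroOut s Y ∈ O := by
      intro s
      induction s using Finset.induction_on with
      | empty => rw [zeroOut_empty]; exact hYO
      | @insert i s his ihs =>
        rw [zeroOut_step his]
        have hcO : Matrix.diagonal (fun j => if j = i then (-1 : ℝ) else 1) * zeroOut s Y *
            Matrix.diagonal (fun j => if j = i then (-1 : ℝ) else 1) ∈ O := by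
          have := conj_mem_hull d (sign_diag_orth i) ihs
          rwa [Matrix.diagonal_transpose] at this
        exact (convex_convexHull ℝ _) ihs hcO (by norm_num) (by norm_num) (by norm_num)
    have hchain : ∀ s : Finset (Fin n), zeroOut s Y ∈ K → Y ∈ K := by
      intro s
      induction s using Finset.induction_on with
      | empty => rw [zeroOut_empty]; exact id
      | @insert i s his ihs =>
        intro hins
        apply ihs
        have hcO : Matrix.diagonal (fun j => if j = i then (-1 : ℝ) else 1) * zeroOut s Y *
            Matrix.diagonal (fun j => if j = i then (-1 : ℝ) else 1) ∈ O := by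
          have := conj_mem_hull d (sign_diag_orth i) (hOz s)
          rwa [Matrix.diagonal_transpose] at this
        have hseg : zeroOut (insert i s) Y ∈ openSegment ℝ (zeroOut s Y)
            (Matrix.diagonal (fun j => if j = i then (-1 : ℝ) else 1) * zeroOut s Y *
              Matrix.diagonal (fun j => if j = i then (-1 : ℝ) else 1)) :=
          ⟨1/2, 1/2, by norm_num, by norm_num, by norm_num, (zeroOut_step his Y).symm⟩
        exact hKext.2 (hOz s) hcO hins hseg
    have := hchain Finset.univ
    rw [zeroOut_univ] at this
    exact this hYK
  constructor
  · apply Set.Subset.antisymm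
    · rintro x ⟨Y, hY, rfl⟩
      exact ⟨⟨k * Y * kᵀ, ⟨Y, hY, rfl⟩, rfl⟩, conj_mem_hull d hk (hF.1 hY)⟩
    · rintro Y ⟨hYpre, hYO⟩
      exact main Y hYO (hfK hYpre)
  · apply Set.Subset.antisymm
    · intro x hxf
      refine ⟨hfK hxf, ?_⟩
      obtain ⟨Z, _, rfl⟩ := hxf
      exact ⟨fun i => Z i i, rfl⟩
    · rintro x ⟨hxK, v, rfl⟩
      refine ⟨Matrix.diagonal v, hxK, ?_⟩
      exact congrArg Matrix.diagonal (funext fun i => Matrix.diagonal_apply_eq v i)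
end

section
/- Let X be a real diagonal n×n matrix, O_X := convexHull{g X gᵀ : g ∈ O(n)}, Π_X := convexHull{σ·X : σ ∈ S_n}, and P the linear map on n×n real matrices that sets all off-diagonal entries to zero. Let f be a face of Π_X and σ ∈ S_n; write σ·f := {σ·D : D ∈ f}. Set F := P⁻¹(f) ∩ O_X and F' := P⁻¹(σ·f) ∩ O_X. Then there exists k ∈ O(n) such that F' = {k Y kᵀ : Y ∈ F}. -/
open Matrix

/-- The action of a permutation `σ` on matrices: `(σ · A) i j = A (σ⁻¹ i) (σ⁻¹ j)`.
On a diagonal matrix this makes the `i`-th diagonal entry the `σ⁻¹ i`-th one of `A`. -/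
def permAct {n : ℕ} (σ : Equiv.Perm (Fin n)) (A : Matrix (Fin n) (Fin n) ℝ) :
    Matrix (Fin n) (Fin n) ℝ :=
  A.submatrix ⇑σ⁻¹ ⇑σ⁻¹

/-- Conjugation by a fixed matrix as a linear map. -/
def conjLin {n : ℕ} (h : Matrix (Fin n) (Fin n) ℝ) :
    Matrix (Fin n) (Fin n) ℝ →ₗ[ℝ] Matrix (Fin n) (Fin n) ℝ where
  toFun Y := h * Y * hᵀ
  map_add' Y Z := by simp [Matrix.mul_add, Matrix.add_mul]
  map_smul' c Y := by simp [Matrix.mul_smul, Matrix.smul_mul]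

lemma conj_mem_OX {n : ℕ} (d : Fin n → ℝ) (h : Matrix (Fin n) (Fin n) ℝ)
    (hh : h ∈ Matrix.orthogonalGroup (Fin n) ℝ)
    {Y : Matrix (Fin n) (Fin n) ℝ}
    (hY : Y ∈ convexHull ℝ {m : Matrix (Fin n) (Fin n) ℝ |
      ∃ g ∈ Matrix.orthogonalGroup (Fin n) ℝ, m = g * Matrix.diagonal d * gᵀ}) :
    h * Y * hᵀ ∈ convexHull ℝ {m : Matrix (Fin n) (Fin n) ℝ |
      ∃ g ∈ Matrix.orthogonalGroup (Fin n) ℝ, m = g * Matrix.diagonal d * gᵀ} := by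
  set S : Set (Matrix (Fin n) (Fin n) ℝ) := {m | ∃ g ∈ Matrix.orthogonalGroup (Fin n) ℝ,
    m = g * Matrix.diagonal d * gᵀ} with hS
  have key : convexHull ℝ S ⊆ (conjLin h) ⁻¹' (convexHull ℝ S) := by
    apply convexHull_min
    · rintro m ⟨g, hg, rfl⟩
      apply subset_convexHull
      refine ⟨h * g, mul_mem hh hg, ?_⟩
      simp [conjLin, Matrix.transpose_mul, Matrix.mul_assoc]
    · exact (convex_convexHull ℝ S).linear_preimage _
  exact key hY

lemma perm_conj {n : ℕ} (σ : Equiv.Perm (Fin n)) (Y : Matrix (Fin n) (Fin n) ℝ) :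
    ((σ⁻¹ : Equiv.Perm (Fin n)).toPEquiv.toMatrix : Matrix (Fin n) (Fin n) ℝ) * Y *
      ((σ⁻¹ : Equiv.Perm (Fin n)).toPEquiv.toMatrix : Matrix (Fin n) (Fin n) ℝ)ᵀ =
      Y.submatrix ⇑σ⁻¹ ⇑σ⁻¹ := by
  rw [← PEquiv.toMatrix_symm, ← Equiv.toPEquiv_symm]
  rw [PEquiv.toMatrix_toPEquiv_mul, PEquiv.mul_toMatrix_toPEquiv]
  ext i j
  simp [Matrix.submatrix_apply]

lemma perm_orth {n : ℕ} (σ : Equiv.Perm (Fin n)) :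
    ((σ : Equiv.Perm (Fin n)).toPEquiv.toMatrix : Matrix (Fin n) (Fin n) ℝ) ∈
      Matrix.orthogonalGroup (Fin n) ℝ := by
  rw [Matrix.mem_orthogonalGroup_iff]
  rw [← PEquiv.toMatrix_symm, ← Equiv.toPEquiv_symm, ← PEquiv.toMatrix_trans,
    ← Equiv.toPEquiv_trans]
  simp

lemma diagPart_conj {n : ℕ} (σ : Equiv.Perm (Fin n)) (Y : Matrix (Fin n) (Fin n) ℝ) :
    diagPart (Y.submatrix ⇑σ⁻¹ ⇑σ⁻¹) = permAct σ (diagPart Y) := by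
  unfold diagPart permAct
  ext i j
  by_cases h : i = j
  · subst h; simp [Matrix.diagonal_apply_eq]
  · rw [Matrix.diagonal_apply_ne _ h, Matrix.submatrix_apply,
      Matrix.diagonal_apply_ne _ (fun hc => h ((σ⁻¹ : Equiv.Perm (Fin n)).injective hc))]

lemma permAct_inj {n : ℕ} (σ : Equiv.Perm (Fin n)) : Function.Injective (permAct σ) := by
  intro A B h
  ext i j
  have := congrFun (congrFun h (σ i)) (σ j)
  simpa [permAct] using this

set_option linter.unusedVariables false in
/-- for `X = diagonal d`, `O_X = convexHull {g X gᵀ : g ∈ O(n)}` and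
`Π_X = convexHull {σ·X : σ ∈ S_n}`, let `f` be a face of `Π_X` and `σ ∈ S_n`. With
`F := P⁻¹(f) ∩ O_X` and `F' := P⁻¹(σ·f) ∩ O_X`, there exists `k ∈ O(n)` such that
`F' = {k Y kᵀ : Y ∈ F}`. -/
theorem exists_conj_of_perm_face
    {n : ℕ} (d : Fin n → ℝ)
    (f : Set (Matrix (Fin n) (Fin n) ℝ)) (hfconv : Convex ℝ f)
    (hf : IsExtreme ℝ (convexHull ℝ {m : Matrix (Fin n) (Fin n) ℝ |
        ∃ σ : Equiv.Perm (Fin n), m = Matrix.diagonal (fun i => d (σ⁻¹ i))}) f)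
    (σ : Equiv.Perm (Fin n)) :
    ∃ k ∈ Matrix.orthogonalGroup (Fin n) ℝ,
      diagPart ⁻¹' (permAct σ '' f) ∩
          convexHull ℝ {m : Matrix (Fin n) (Fin n) ℝ |
            ∃ g ∈ Matrix.orthogonalGroup (Fin n) ℝ, m = g * Matrix.diagonal d * gᵀ} =
        (fun Y => k * Y * kᵀ) ''
          (diagPart ⁻¹' f ∩ convexHull ℝ {m : Matrix (Fin n) (Fin n) ℝ |
            ∃ g ∈ Matrix.orthogonalGroup (Fin n) ℝ, m = g * Matrix.diagonal d * gᵀ}) := by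
  set k : Matrix (Fin n) (Fin n) ℝ := (σ⁻¹ : Equiv.Perm (Fin n)).toPEquiv.toMatrix with hkdef
  have hkT : kᵀ = (σ : Equiv.Perm (Fin n)).toPEquiv.toMatrix := by
    rw [hkdef, ← PEquiv.toMatrix_symm, ← Equiv.toPEquiv_symm]
    rfl
  have hk : k ∈ Matrix.orthogonalGroup (Fin n) ℝ := perm_orth σ⁻¹
  have hkT_orth : kᵀ ∈ Matrix.orthogonalGroup (Fin n) ℝ := by
    rw [hkT]; exact perm_orth σ
  have hstar : star k = kᵀ := by
    rw [Matrix.star_eq_conjTranspose, Matrix.conjTranspose_eq_transpose_of_trivial]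
  have h1 : k * kᵀ = 1 := by
    have := (Matrix.mem_orthogonalGroup_iff (Fin n) ℝ).mp hk
    exact this
  have h2 : kᵀ * k = 1 := by
    have := (Matrix.mem_orthogonalGroup_iff' (Fin n) ℝ).mp hk
    exact this
  refine ⟨k, hk, ?_⟩
  ext x
  constructor
  · rintro ⟨hx1, hx2⟩
    obtain ⟨D, hDf, hD⟩ := hx1
    refine ⟨kᵀ * x * k, ⟨?_, ?_⟩, ?_⟩
    · have hx : x = k * (kᵀ * x * k) * kᵀ := by
        rw [← Matrix.mul_assoc, ← Matrix.mul_assoc, h1, Matrix.one_mul,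
          Matrix.mul_assoc, h1, Matrix.mul_one]
      have : diagPart x = permAct σ (diagPart (kᵀ * x * k)) := by
        conv_lhs => rw [hx]
        rw [perm_conj σ, diagPart_conj]
      rw [← hD] at this
      have hDeq : D = diagPart (kᵀ * x * k) := permAct_inj σ this
      show diagPart (kᵀ * x * k) ∈ f
      rw [← hDeq]; exact hDf
    · have := conj_mem_OX d kᵀ hkT_orth hx2
      rwa [Matrix.transpose_transpose] at this
    · show k * (kᵀ * x * k) * kᵀ = x
      rw [← Matrix.mul_assoc, ← Matrix.mul_assoc, h1, Matrix.one_mul,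
        Matrix.mul_assoc, h1, Matrix.mul_one]
  · rintro ⟨Y, ⟨hYf, hYO⟩, rfl⟩
    refine ⟨?_, conj_mem_OX d k hk hYO⟩
    show diagPart (k * Y * kᵀ) ∈ permAct σ '' f
    rw [perm_conj σ, diagPart_conj]
    exact ⟨diagPart Y, hYf, rfl⟩
end
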